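/- arXiv:1607.07011 — 5 statements merged into one kernel-verified Lean document; each statement's English description precedes it below -/
import Mathlib

section
/- Let g ≥ 2 and m > g be integers. Then for every integer d ≥ 2, l_g(d) ≤ (m − g + 1) + ⌊log_m d⌋ · l_g(m) + (μ_m(d) − 1), where μ_m(d) is the number of nonzero digits of d in base m. -/
/-- `IsGAddChain g a r d` says that `a 0 = 1, a 1, …, a r = d` is a `g`-addition chain
for `d`: each term `a i` (for `1 ≤ i ≤ r`) is a sum `a (j 1) + ⋯ + a (j k)` of `k`
earlier terms, where `2 ≤ k ≤ g` and `j 1 ≤ ⋯ ≤ j k ≤ i - 1`. -/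
def IsGAddChain (g : ℕ) (a : ℕ → ℕ) (r : ℕ) (d : ℕ) : Prop :=
  a 0 = 1 ∧ a r = d ∧
  ∀ i, 1 ≤ i → i ≤ r →
    ∃ k, 2 ≤ k ∧ k ≤ g ∧
      ∃ j : Fin k → ℕ, Monotone j ∧ (∀ t, j t ≤ i - 1) ∧
        a i = ∑ t, a (j t)

/-- `gAddChainLength g d` is `l_g(d)`, the length of a shortest `g`-addition chain for `d`. -/
noncomputable def gAddChainLength (g d : ℕ) : ℕ :=
  sInf {r | ∃ a : ℕ → ℕ, IsGAddChain g a r d}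

/-- `nonzeroDigits m d` is `μ_m(d)`, the number of nonzero digits of `d` in base `m`. -/
def nonzeroDigits (m d : ℕ) : ℕ :=
  ((Nat.digits m d).filter (· ≠ 0)).length

namespace MaryAux

lemma sum_ite_lt (a : ℕ → ℕ) (cc p q : ℕ) :
    ∑ t : Fin (cc + 1), a (if (t : ℕ) < cc then p else q) = cc * a p + a q := by
  rw [Fin.sum_univ_castSucc]
  have h1 : ∀ t : Fin cc, (if ((Fin.castSucc t : Fin (cc + 1)) : ℕ) < cc then p else q) = p :=
    fun t => if_pos (by simp)
  have h2 : (if ((Fin.last cc : Fin (cc + 1)) : ℕ) < cc then p else q) = q :=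
    if_neg (by simp)
  rw [h2, Finset.sum_congr rfl (fun t _ => by rw [h1 t])]
  simp [Finset.sum_const, Finset.card_univ, mul_comm]

lemma mono_thresh {k : ℕ} {cc p q : ℕ} (h : p ≤ q) :
    Monotone (fun t : Fin k => if (t : ℕ) < cc then p else q) := by
  intro s t hst
  have hst' : (s : ℕ) ≤ (t : ℕ) := hst
  dsimp only
  split_ifs <;> omega

lemma chain_one (g : ℕ) : IsGAddChain g (fun _ => 1) 0 1 :=
  ⟨rfl, rfl, fun i h1 h0 => by omega⟩

lemma chain_self {g : ℕ} {a : ℕ → ℕ} {r x : ℕ} (h : IsGAddChain g a r x) :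
    IsGAddChain g a r (a r) := ⟨h.1, rfl, h.2.2⟩

lemma chain_extend {g : ℕ} {a : ℕ → ℕ} {r x : ℕ} (h : IsGAddChain g a r x)
    {cc p q : ℕ} (hcc : 1 ≤ cc) (hccg : cc + 1 ≤ g) (hpq : p ≤ q) (hq : q ≤ r) :
    ∃ A : ℕ → ℕ, IsGAddChain g A (r + 1) (cc * a p + a q) ∧ ∀ i, i ≤ r → A i = a i := by
  obtain ⟨h0, hr, hstep⟩ := h
  refine ⟨fun i => if i = r + 1 then cc * a p + a q else a i, ⟨?_, ?_, ?_⟩, ?_⟩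
  · beta_reduce
    rw [if_neg (show ¬(0 = r + 1) by omega)]
    exact h0
  · beta_reduce
    rw [if_pos rfl]
  · intro i hi1 hir
    by_cases hi : i = r + 1
    · subst hi
      refine ⟨cc + 1, by omega, hccg, fun t => if (t : ℕ) < cc then p else q,
        mono_thresh hpq, fun t => by beta_reduce; split_ifs <;> omega, ?_⟩
      have key : ∀ t : Fin (cc + 1),
          (if (if (t : ℕ) < cc then p else q) = r + 1 then cc * a p + a q
            else a (if (t : ℕ) < cc then p else q))
          = a (if (t : ℕ) < cc then p else q) := by
        intro t
        rw [if_neg (by split_ifs <;> omega)]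
      beta_reduce
      rw [if_pos rfl, Finset.sum_congr rfl (fun t _ => key t), sum_ite_lt]
    · obtain ⟨k, hk2, hkg, j, hj, hjb, hsum⟩ := hstep i hi1 (by omega)
      refine ⟨k, hk2, hkg, j, hj, hjb, ?_⟩
      have key : ∀ t : Fin k,
          (if j t = r + 1 then cc * a p + a q else a (j t)) = a (j t) := by
        intro t
        have := hjb t
        rw [if_neg (by omega)]
      beta_reduce
      rw [if_neg hi, Finset.sum_congr rfl (fun t _ => key t)]
      exact hsum
  · intro i hi
    beta_reduce
    rw [if_neg (by omega)]

lemma chain_mul_at {g : ℕ} {a : ℕ → ℕ} {r x : ℕ} (ha : IsGAddChain g a r x)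
    {b : ℕ → ℕ} {s y : ℕ} (hb : IsGAddChain g b s y) (hs : 1 ≤ s)
    {p : ℕ} (hp : p ≤ r) :
    ∃ A : ℕ → ℕ, IsGAddChain g A (r + s) (a p * y) ∧ ∀ i, i ≤ r → A i = a i := by
  obtain ⟨ha0, har, hastep⟩ := ha
  obtain ⟨hb0, hbs, hbstep⟩ := hb
  refine ⟨fun i => if i ≤ r then a i else a p * b (i - r), ⟨?_, ?_, ?_⟩, ?_⟩
  · beta_reduce
    rw [if_pos (Nat.zero_le r)]
    exact ha0
  · beta_reduce
    rw [if_neg (by omega), show r + s - r = s from by omega, hbs]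
  · intro i hi1 hir
    by_cases hi : i ≤ r
    · obtain ⟨k, hk2, hkg, j, hj, hjb, hsum⟩ := hastep i hi1 hi
      refine ⟨k, hk2, hkg, j, hj, hjb, ?_⟩
      have key : ∀ t : Fin k,
          (if j t ≤ r then a (j t) else a p * b (j t - r)) = a (j t) := by
        intro t
        have := hjb t
        rw [if_pos (by omega)]
      beta_reduce
      rw [if_pos hi, Finset.sum_congr rfl (fun t _ => key t)]
      exact hsum
    · obtain ⟨k, hk2, hkg, j, hj, hjb, hsum⟩ := hbstep (i - r) (by omega) (by omega)
      refine ⟨k, hk2, hkg, fun t => if j t = 0 then p else j t + r, ?_, ?_, ?_⟩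
      · intro s' t' h'
        have hjj := hj h'
        beta_reduce
        split_ifs <;> omega
      · intro t
        have := hjb t
        beta_reduce
        split_ifs <;> omega
      · have key : ∀ t : Fin k,
            (if (if j t = 0 then p else j t + r) ≤ r then a (if j t = 0 then p else j t + r)
              else a p * b ((if j t = 0 then p else j t + r) - r))
            = a p * b (j t) := by
          intro t
          by_cases h0 : j t = 0
          · rw [if_pos (by rw [if_pos h0]; omega), if_pos h0, h0, hb0, mul_one]
          · rw [if_neg (by rw [if_neg h0]; omega), if_neg h0,
              show j t + r - r = j t from by omega]
        beta_reduce
        rw [if_neg hi, Finset.sum_congr rfl (fun t _ => key t), hsum, Finset.mul_sum]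
  · intro i hi
    beta_reduce
    rw [if_pos hi]

lemma prefix_chain {g : ℕ} (hg : 2 ≤ g) (t : ℕ) :
    ∃ a : ℕ → ℕ, IsGAddChain g a (t + 1) (g + t) ∧
      ∀ v, g ≤ v → v ≤ g + t → ∃ i, i ≤ t + 1 ∧ a i = v := by
  induction t with
  | zero =>
    obtain ⟨A, hA, _⟩ := chain_extend (chain_one g) (cc := g - 1) (p := 0) (q := 0)
      (by omega) (by omega) le_rfl le_rfl
    have e : (g - 1) * (fun _ : ℕ => 1) 0 + (fun _ : ℕ => 1) 0 = g + 0 := by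
      simp; omega
    rw [e] at hA
    exact ⟨A, hA, fun v hv1 hv2 => ⟨1, le_rfl, by
      have : v = g + 0 := by omega
      rw [this]; exact hA.2.1⟩⟩
  | succ t ih =>
    obtain ⟨a, ha, hhelp⟩ := ih
    obtain ⟨A, hA, hAle⟩ := chain_extend ha (cc := 1) (p := 0) (q := t + 1)
      le_rfl (by omega) (by omega) le_rfl
    have e : 1 * a 0 + a (t + 1) = g + (t + 1) := by rw [ha.1, ha.2.1]; omega
    rw [e] at hA
    refine ⟨A, hA, ?_⟩
    intro v hv1 hv2
    by_cases hv : v ≤ g + t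
    · obtain ⟨i, hi, hai⟩ := hhelp v hv1 hv
      exact ⟨i, by omega, by rw [hAle i hi]; exact hai⟩
    · exact ⟨t + 1 + 1, le_rfl, by
        have : v = g + (t + 1) := by omega
        rw [this]; exact hA.2.1⟩

lemma mary_main {g m : ℕ} (hg : 2 ≤ g) (hm : g < m)
    {lm : ℕ} {b : ℕ → ℕ} (hb : IsGAddChain g b lm m) (hlm : 1 ≤ lm) :
    ∀ (L : List ℕ) (c : ℕ), 1 ≤ c → c < m → (∀ x ∈ L, x < m) →
    ∃ (a : ℕ → ℕ) (r : ℕ), IsGAddChain g a r (a r) ∧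
      (∃ p, p ≤ r ∧ a p = Nat.ofDigits m (L ++ [c])) ∧
      (∀ v, g ≤ v → v < m → ∃ i, i ≤ r ∧ a i = v) ∧
      r ≤ (m - g + 1) + L.length * lm + (L.filter (· ≠ 0)).length ∧
      (L ≠ [] → a r = Nat.ofDigits m (L ++ [c])) := by
  intro L
  induction L with
  | nil =>
    intro c hc1 hcm _
    have hV : Nat.ofDigits m (([] : List ℕ) ++ [c]) = c := by
      simp [Nat.ofDigits_singleton]
    obtain ⟨a, ha, hhelp⟩ := prefix_chain hg (m - 1 - g)
    have hhelp' : ∀ v, g ≤ v → v < m → ∃ i, i ≤ m - 1 - g + 1 ∧ a i = v :=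
      fun v h1 h2 => hhelp v h1 (by omega)
    by_cases hcg : c < g
    · by_cases hc1' : c = 1
      · refine ⟨a, m - 1 - g + 1, chain_self ha, ⟨0, by omega, ?_⟩, hhelp', by simp; omega,
          fun h => absurd rfl h⟩
        rw [hV, hc1']; exact ha.1
      · -- 2 ≤ c < g : one extra step
        obtain ⟨A, hA, hAle⟩ := chain_extend ha (cc := c - 1) (p := 0) (q := 0)
          (by omega) (by omega) le_rfl (by omega)
        have e : (c - 1) * a 0 + a 0 = c := by rw [ha.1]; omega
        rw [e] at hA
        refine ⟨A, m - 1 - g + 1 + 1, chain_self hA, ⟨m - 1 - g + 1 + 1, le_rfl, ?_⟩,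
          ?_, by simp; omega, fun h => absurd rfl h⟩
        · rw [hV]; exact hA.2.1
        · intro v h1 h2
          obtain ⟨i, hi, hai⟩ := hhelp' v h1 h2
          exact ⟨i, by omega, by rw [hAle i hi]; exact hai⟩
    · -- g ≤ c : c is already in the prefix chain
      obtain ⟨i, hi, hai⟩ := hhelp' c (by omega) hcm
      refine ⟨a, m - 1 - g + 1, chain_self ha, ⟨i, hi, by rw [hV]; exact hai⟩, hhelp',
        by simp; omega, fun h => absurd rfl h⟩
  | cons l0 L' ih =>
    intro c hc1 hcm hx
    obtain ⟨a, r, hchain, ⟨p, hp, hap⟩, hhelp, hbound, _⟩ :=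
      ih c hc1 hcm (fun x hx' => hx x (List.mem_cons_of_mem _ hx'))
    obtain ⟨A, hA, hAle⟩ := chain_mul_at hchain hb hlm hp
    have hV : Nat.ofDigits m ((l0 :: L') ++ [c])
        = l0 + m * Nat.ofDigits m (L' ++ [c]) := by
      rw [List.cons_append, Nat.ofDigits_cons]
    have hAhelp : ∀ v, g ≤ v → v < m → ∃ i, i ≤ r + lm ∧ A i = v := by
      intro v h1 h2
      obtain ⟨i, hi, hai⟩ := hhelp v h1 h2
      exact ⟨i, by omega, by rw [hAle i hi]; exact hai⟩
    by_cases hl0 : l0 = 0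
    · subst hl0
      refine ⟨A, r + lm, chain_self hA, ⟨r + lm, le_rfl, ?_⟩, hAhelp, ?_, fun _ => ?_⟩
      · rw [hV, hA.2.1, hap]; ring
      · have hf : ((0 : ℕ) :: L').filter (· ≠ 0) = L'.filter (· ≠ 0) := by simp
        rw [List.length_cons, hf,
          show (m - g + 1) + (L'.length + 1) * lm + (L'.filter (· ≠ 0)).length
            = ((m - g + 1) + L'.length * lm + (L'.filter (· ≠ 0)).length) + lm from by ring]
        exact Nat.add_le_add_right hbound lm
      · rw [hV, hA.2.1, hap]; ring
    · -- nonzero digit: one more step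
      have hl0m : l0 < m := hx l0 List.mem_cons_self
      have hreal : ∃ cc pp, 1 ≤ cc ∧ cc + 1 ≤ g ∧ pp ≤ r + lm ∧ cc * A pp = l0 := by
        by_cases hlg : l0 < g
        · refine ⟨l0, 0, by omega, by omega, by omega, ?_⟩
          rw [hAle 0 (by omega), hchain.1, mul_one]
        · obtain ⟨i, hi, hai⟩ := hAhelp l0 (by omega) hl0m
          exact ⟨1, i, le_rfl, by omega, hi, by rw [one_mul]; exact hai⟩
      obtain ⟨cc, pp, hcc, hccg, hpp, hval⟩ := hreal
      obtain ⟨A2, hA2, hA2le⟩ := chain_extend hA hcc hccg hpp le_rfl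
      have e : cc * A pp + A (r + lm) = Nat.ofDigits m ((l0 :: L') ++ [c]) := by
        rw [hval, hA.2.1, hap, hV]; ring
      rw [e] at hA2
      refine ⟨A2, r + lm + 1, chain_self hA2, ⟨r + lm + 1, le_rfl, hA2.2.1⟩, ?_, ?_,
        fun _ => hA2.2.1⟩
      · intro v h1 h2
        obtain ⟨i, hi, hai⟩ := hAhelp v h1 h2
        exact ⟨i, by omega, by rw [hA2le i hi]; exact hai⟩
      · have hf : ((l0 : ℕ) :: L').filter (· ≠ 0) = l0 :: L'.filter (· ≠ 0) := by
          simp [hl0]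
        rw [List.length_cons, hf, List.length_cons,
          show (m - g + 1) + (L'.length + 1) * lm + ((L'.filter (· ≠ 0)).length + 1)
            = ((m - g + 1) + L'.length * lm + (L'.filter (· ≠ 0)).length) + lm + 1 from by
              ring]
        exact Nat.add_le_add_right (Nat.add_le_add_right hbound lm) 1

end MaryAux

/-- for integers `g ≥ 2`, `m > g` and `d ≥ 2`, the `m`-ary method gives
`l_g(d) ≤ (m - g + 1) + ⌊log_m d⌋ * l_g(m) + (μ_m(d) - 1)`. -/
theorem gAddChainLength_le_mary (g m d : ℕ) (hg : 2 ≤ g) (hm : g < m) (hd : 2 ≤ d) :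
    gAddChainLength g d ≤
      (m - g + 1) + Nat.log m d * gAddChainLength g m + (nonzeroDigits m d - 1) := by
  classical
  -- a chain for m exists
  obtain ⟨am, ham, _⟩ := MaryAux.prefix_chain hg (m - g)
  have ham' : IsGAddChain g am (m - g + 1) m := by
    have : g + (m - g) = m := by omega
    rwa [this] at ham
  have hne : {r | ∃ a : ℕ → ℕ, IsGAddChain g a r m}.Nonempty := ⟨m - g + 1, am, ham'⟩
  have hmem : ∃ bb : ℕ → ℕ, IsGAddChain g bb (gAddChainLength g m) m := Nat.sInf_mem hne
  obtain ⟨b, hb⟩ := hmem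
  set lm := gAddChainLength g m with hlmdef
  have hlm : 1 ≤ lm := by
    by_contra h
    have h0 : lm = 0 := by omega
    rw [h0] at hb
    have h1 := hb.1
    have h2 := hb.2.1
    omega
  -- the digits of d
  have hd0 : d ≠ 0 := by omega
  have hm1 : 1 < m := by omega
  have hLne : Nat.digits m d ≠ [] := Nat.digits_ne_nil_iff_ne_zero.mpr hd0
  rcases List.eq_nil_or_concat (Nat.digits m d) with h | ⟨L', c, hc⟩
  · exact absurd h hLne
  · have hc' : Nat.digits m d = L' ++ [c] := by rw [hc]; simp
    have hcne : c ≠ 0 := by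
      obtain ⟨gl, hgl0, hgl⟩ : ∃ gl, gl ≠ 0 ∧ (Nat.digits m d).getLast? = some gl :=
        ⟨_, Nat.getLast_digit_ne_zero m hd0, List.getLast?_eq_getLast _⟩
      rw [hc', List.getLast?_concat] at hgl
      have : c = gl := by injection hgl
      rw [this]; exact hgl0
    have hcm : c < m := Nat.digits_lt_base hm1 (by rw [hc']; simp)
    have hlen : (Nat.digits m d).length = Nat.log m d + 1 := Nat.digits_len m d hm1 hd0
    have hlen' : L'.length = Nat.log m d := by
      rw [hc'] at hlen; simp at hlen; omega
    have hcnt : nonzeroDigits m d = (L'.filter (· ≠ 0)).length + 1 := by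
      unfold nonzeroDigits
      rw [hc', List.filter_append]
      simp [hcne]
    have hofd : Nat.ofDigits m (L' ++ [c]) = d := by
      rw [← hc', Nat.ofDigits_digits]
    by_cases hL' : L' = []
    · -- single digit: d = c < m
      have hdc : d = c := by rw [← hofd, hL']; simp [Nat.ofDigits_singleton]
      have hdm : d < m := hdc ▸ hcm
      have hlog : Nat.log m d = 0 := Nat.log_eq_zero_iff.mpr (Or.inl hdm)
      have hcnt1 : nonzeroDigits m d = 1 := by rw [hcnt, hL']; simp
      have hkey : gAddChainLength g d ≤ m - g + 1 := by
        by_cases hdg : d < g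
        · obtain ⟨A, hA, _⟩ := MaryAux.chain_extend (MaryAux.chain_one g)
            (cc := d - 1) (p := 0) (q := 0) (by omega) (by omega) le_rfl le_rfl
          have e : (d - 1) * (fun _ : ℕ => 1) 0 + (fun _ : ℕ => 1) 0 = d := by
            simp; omega
          rw [e] at hA
          have hmem2 : 0 + 1 ∈ {r | ∃ a : ℕ → ℕ, IsGAddChain g a r d} := ⟨A, hA⟩
          exact (Nat.sInf_le hmem2).trans (by omega)
        · obtain ⟨a2, ha2, _⟩ := MaryAux.prefix_chain hg (d - g)
          have e : g + (d - g) = d := by omega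
          rw [e] at ha2
          have hmem2 : d - g + 1 ∈ {r | ∃ a : ℕ → ℕ, IsGAddChain g a r d} := ⟨a2, ha2⟩
          exact (Nat.sInf_le hmem2).trans (by omega)
      rw [hlog, hcnt1]
      simpa using hkey
    · obtain ⟨a, r, hchain, ⟨p, hp, hap⟩, hhelp, hbound, hlast⟩ :=
        MaryAux.mary_main hg hm hb hlm L' c (by omega) hcm
          (fun x hx => Nat.digits_lt_base hm1 (by rw [hc']; exact List.mem_append_left _ hx))
      have hend : a r = d := by rw [hlast hL', hofd]
      have hchain' : IsGAddChain g a r d := ⟨hchain.1, hend, hchain.2.2⟩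
      have hmem2 : r ∈ {r | ∃ a : ℕ → ℕ, IsGAddChain g a r d} := ⟨a, hchain'⟩
      have h1 : gAddChainLength g d ≤ r := Nat.sInf_le hmem2
      refine h1.trans ?_
      rw [hlen'] at hbound
      calc r ≤ (m - g + 1) + Nat.log m d * lm + (L'.filter (· ≠ 0)).length := hbound
        _ = (m - g + 1) + Nat.log m d * lm + (nonzeroDigits m d - 1) := by omega
end

section
/- Let g ≥ 2 be an integer, let s ≥ 1 be an integer and set m = g^s. Then for every integer d ≥ 2, l_g(d) ≤ (m − g) + ⌊log_g d⌋ + μ_m(d), where μ_m(d) is the number of nonzero digits of d in base m. -/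
namespace GAdd

def baseFn (g : ℕ) : ℕ → ℕ := fun i => if i = 0 then 1 else g + i - 1

def ChainPrefix (g : ℕ) (a : ℕ → ℕ) (r : ℕ) : Prop :=
  a 0 = 1 ∧ ∀ i, 1 ≤ i → i ≤ r →
    ∃ k, 2 ≤ k ∧ k ≤ g ∧
      ∃ j : Fin k → ℕ, Monotone j ∧ (∀ t, j t ≤ i - 1) ∧ a i = ∑ t, a (j t)

lemma sum_split (a : ℕ → ℕ) (p q u v : ℕ) :
    ∑ t : Fin (p + q), a (if (t : ℕ) < p then u else v) = p * a u + q * a v := by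
  rw [Fin.sum_univ_add]
  have h1 : ∀ i : Fin p, a (if ((Fin.castAdd q i : Fin (p + q)) : ℕ) < p then u else v) = a u := by
    intro i
    rw [if_pos (by simpa using i.isLt)]
  have h2 : ∀ i : Fin q, a (if ((Fin.natAdd p i : Fin (p + q)) : ℕ) < p then u else v) = a v := by
    intro i
    rw [if_neg (by simp only [Fin.coe_natAdd]; omega)]
  rw [Finset.sum_congr rfl fun i _ => h1 i, Finset.sum_congr rfl fun i _ => h2 i]
  simp [mul_comm]

lemma cond_of {g : ℕ} {a : ℕ → ℕ} {i : ℕ} (p q u v : ℕ)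
    (h2 : 2 ≤ p + q) (hgle : p + q ≤ g) (huv : u ≤ v) (hvi : v ≤ i - 1)
    (ha : a i = p * a u + q * a v) :
    ∃ k, 2 ≤ k ∧ k ≤ g ∧ ∃ j : Fin k → ℕ, Monotone j ∧ (∀ t, j t ≤ i - 1) ∧
      a i = ∑ t, a (j t) := by
  refine ⟨p + q, h2, hgle, fun t => if (t : ℕ) < p then u else v, ?_, ?_, ?_⟩
  · intro t₁ t₂ hle
    have hco : (t₁ : ℕ) ≤ (t₂ : ℕ) := hle
    dsimp only
    by_cases h1 : (t₁ : ℕ) < p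
    · by_cases hb : (t₂ : ℕ) < p
      · rw [if_pos h1, if_pos hb]
      · rw [if_pos h1, if_neg hb]; exact huv
    · have hb : ¬ (t₂ : ℕ) < p := fun hh => h1 (lt_of_le_of_lt hco hh)
      rw [if_neg h1, if_neg hb]
  · intro t
    dsimp only
    by_cases h1 : (t : ℕ) < p
    · rw [if_pos h1]; exact le_trans huv hvi
    · rw [if_neg h1]; exact hvi
  · rw [ha]; exact (sum_split a p q u v).symm

lemma ChainPrefix.extend {g : ℕ} {a : ℕ → ℕ} {r : ℕ} (h : ChainPrefix g a r)
    {p q u v : ℕ} (hu : u ≤ r) (hv : v ≤ r) (h2 : 2 ≤ p + q) (hpg : p + q ≤ g) :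
    ChainPrefix g (Function.update a (r + 1) (p * a u + q * a v)) (r + 1) := by
  obtain ⟨h0, hstep⟩ := h
  constructor
  · rw [Function.update_of_ne (by omega : (0:ℕ) ≠ r + 1)]; exact h0
  · intro i hi1 hir
    rcases Nat.lt_or_ge i (r + 1) with hlt | hge
    · obtain ⟨k, hk2, hkg, j, hmono, hjle, hsum⟩ := hstep i hi1 (by omega)
      refine ⟨k, hk2, hkg, j, hmono, hjle, ?_⟩
      rw [Function.update_of_ne (by omega : i ≠ r + 1), hsum]
      refine Finset.sum_congr rfl fun t _ => ?_
      rw [Function.update_of_ne (by have := hjle t; omega : j t ≠ r + 1)]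
    · have hieq : i = r + 1 := by omega
      subst hieq
      have hvv : a u = Function.update a (r+1) (p * a u + q * a v) u := by
        rw [Function.update_of_ne (by omega : u ≠ r + 1)]
      have hvv' : a v = Function.update a (r+1) (p * a u + q * a v) v := by
        rw [Function.update_of_ne (by omega : v ≠ r + 1)]
      rcases le_total u v with huv | hvu
      · refine cond_of p q u v h2 hpg huv (by omega) ?_
        rw [Function.update_self, ← hvv, ← hvv']
      · refine cond_of q p v u (by omega) (by omega) hvu (by omega) ?_
        rw [Function.update_self, ← hvv, ← hvv']
        ring


def GoodState (g m : ℕ) (a : ℕ → ℕ) (r w : ℕ) : Prop :=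
  ChainPrefix g a r ∧ m - g ≤ r ∧ (∀ i, i ≤ m - g → a i = baseFn g i) ∧
    ∃ iw, iw ≤ r ∧ a iw = w

lemma GoodState.extendStep {g m : ℕ} {a : ℕ → ℕ} {r w : ℕ} (hst : GoodState g m a r w)
    {p q u v : ℕ} (hu : u ≤ r) (hv : v ≤ r) (h2 : 2 ≤ p + q) (hpg : p + q ≤ g) :
    ∃ a', GoodState g m a' (r + 1) (p * a u + q * a v) ∧
      (∀ i, i ≤ r → a' i = a i) ∧ a' (r + 1) = p * a u + q * a v := by
  obtain ⟨hpre, hmg, hbase, _⟩ := hst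
  refine ⟨Function.update a (r + 1) (p * a u + q * a v),
    ⟨hpre.extend hu hv h2 hpg, by omega, ?_, ⟨r + 1, le_refl _, Function.update_self _ _ _⟩⟩,
    ?_, Function.update_self _ _ _⟩
  · intro i hi
    rw [Function.update_of_ne (by omega : i ≠ r + 1)]
    exact hbase i hi
  · intro i hi
    rw [Function.update_of_ne (by omega : i ≠ r + 1)]

lemma base_state {g m : ℕ} (hg : 2 ≤ g) (hgm : g ≤ m) :
    GoodState g m (baseFn g) (m - g) 1 := by
  refine ⟨⟨by simp [baseFn], ?_⟩, le_refl _, fun i _ => rfl,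
    ⟨0, Nat.zero_le _, by simp [baseFn]⟩⟩
  intro i hi1 hir
  rcases eq_or_lt_of_le hi1 with h1 | h2
  · subst h1
    refine cond_of g 0 0 0 (by omega) (by omega) le_rfl (Nat.zero_le _) ?_
    simp [baseFn]
  · refine cond_of 1 1 0 (i - 1) (by omega) (by omega) (Nat.zero_le _) le_rfl ?_
    simp only [baseFn]
    rw [if_neg (by omega : ¬ i = 0), if_neg (by omega : ¬ i - 1 = 0), if_true]
    omega

lemma digit_avail {g m : ℕ} (hg : 2 ≤ g) {a : ℕ → ℕ} {r w : ℕ}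
    (hst : GoodState g m a r w) {c : ℕ} (hc1 : 1 ≤ c) (hcm : c < m) :
    ∃ α uc, uc ≤ m - g ∧ 1 ≤ α ∧ α + 1 ≤ g ∧ α * a uc = c := by
  obtain ⟨⟨h0, -⟩, hmg, hbase, -⟩ := hst
  rcases Nat.lt_or_ge c g with h | h
  · exact ⟨c, 0, Nat.zero_le _, hc1, by omega, by rw [h0, mul_one]⟩
  · refine ⟨1, c - g + 1, by omega, le_rfl, by omega, ?_⟩
    rw [hbase (c - g + 1) (by omega), one_mul, baseFn]
    rw [if_neg (by omega)]
    omega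

lemma mul_pow {g m : ℕ} (hg : 2 ≤ g) {a : ℕ → ℕ} {r w : ℕ}
    (hst : GoodState g m a r w) :
    ∀ n : ℕ, ∃ a', GoodState g m a' (r + n) (w * g ^ n) := by
  intro n
  induction n with
  | zero => exact ⟨a, by simpa using hst⟩
  | succ n ih =>
    obtain ⟨a₁, h₁⟩ := ih
    obtain ⟨iw, hiw, hval⟩ := h₁.2.2.2
    obtain ⟨a₂, h₂, -, -⟩ := h₁.extendStep (p := g) (q := 0) hiw hiw (by omega) (by omega)
    refine ⟨a₂, ?_⟩
    have hv : g * a₁ iw + 0 * a₁ iw = w * g ^ (n + 1) := by rw [hval]; ring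
    rw [hv] at h₂
    have : r + n + 1 = r + (n + 1) := by omega
    rwa [this] at h₂

lemma stage {g m s : ℕ} (hg : 2 ≤ g) (hgm : g ≤ m) (hs : 1 ≤ s) (hm : m = g ^ s)
    {a : ℕ → ℕ} {r w c : ℕ} (hst : GoodState g m a r w) (hw : 1 ≤ w) (hc : c < m) :
    ∃ a', GoodState g m a' (r + s + (if c = 0 then 0 else 1)) (w * m + c) := by
  rcases eq_or_ne c 0 with rfl | hc0
  · obtain ⟨a', h'⟩ := mul_pow hg hst s
    refine ⟨a', ?_⟩
    simpa [hm] using h'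
  · obtain ⟨a₁, h₁⟩ := mul_pow hg hst (s - 1)
    obtain ⟨α, uc, hucle, hα1, hαg, hαval⟩ := digit_avail hg h₁ (by omega) hc
    obtain ⟨iw, hiw, hval⟩ := h₁.2.2.2
    have hucr : uc ≤ r + (s - 1) := le_trans hucle h₁.2.1
    obtain ⟨a₂, h₂, hkeep₂, htop₂⟩ :=
      h₁.extendStep (p := α) (q := g - α) (u := uc) (v := iw) hucr hiw (by omega) (by omega)
    obtain ⟨a₃, h₃, -, -⟩ :=
      h₂.extendStep (p := α) (q := 1) (u := iw) (v := r + (s - 1) + 1)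
        (by omega) le_rfl (by omega) (by omega)
    refine ⟨a₃, ?_⟩
    have hkiw : a₂ iw = w * g ^ (s - 1) := by rw [hkeep₂ iw hiw, hval]
    have hvv : α * a₂ iw + 1 * a₂ (r + (s - 1) + 1) = w * m + c := by
      rw [hkiw, htop₂, hαval, hval, one_mul]
      have hgs : g ^ s = g ^ (s - 1) * g := by
        rw [← pow_succ]
        congr 1
        omega
      have : α * (w * g ^ (s - 1)) + (c + (g - α) * (w * g ^ (s - 1)))
          = (α + (g - α)) * (w * g ^ (s - 1)) + c := by ring
      rw [this, (by omega : α + (g - α) = g), hm, hgs]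
      ring
    rw [hvv] at h₃
    have hidx : r + (s - 1) + 1 + 1 = r + s + (if c = 0 then 0 else 1) := by
      rw [if_neg hc0]; omega
    rwa [hidx] at h₃

lemma horner {g m s : ℕ} (hg : 2 ≤ g) (hgm : g ≤ m) (hs : 1 ≤ s) (hm : m = g ^ s) :
    ∀ L : List ℕ, (∀ x ∈ L, x < m) → ∀ a r w, GoodState g m a r w → 1 ≤ w →
      ∃ a', GoodState g m a'
        (r + s * L.length + (L.filter (· ≠ 0)).length)
        (List.foldl (fun acc c => acc * m + c) w L) := by
  intro L
  induction L with
  | nil =>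
    intro _ a r w hst _
    exact ⟨a, by simpa using hst⟩
  | cons c L ih =>
    intro hlt a r w hst hw
    obtain ⟨a₁, h₁⟩ := stage hg hgm hs hm hst hw (hlt c (by simp))
    have hm1 : 1 ≤ m := by omega
    have hw1 : 1 ≤ w * m + c := by nlinarith
    obtain ⟨a₂, h₂⟩ := ih (fun x hx => hlt x (by simp [hx])) a₁ _ _ h₁ hw1
    refine ⟨a₂, ?_⟩
    have hidx : r + s + (if c = 0 then 0 else 1) + s * L.length + (L.filter (· ≠ 0)).length
        = r + s * (c :: L).length + ((c :: L).filter (· ≠ 0)).length := by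
      rcases eq_or_ne c 0 with rfl | hc0
      · simp [List.filter_cons, Nat.mul_succ]
        omega
      · simp [List.filter_cons, hc0, Nat.mul_succ]
        omega
    rw [hidx] at h₂
    exact h₂


lemma init_top {g m : ℕ} (hg : 2 ≤ g) (hgm : g ≤ m) {c : ℕ} (hc1 : 1 ≤ c) (hcm : c < m) :
    ∃ a r₀, r₀ ≤ m - g + 1 ∧ GoodState g m a r₀ c := by
  have hbs := base_state (m := m) hg hgm
  rcases Nat.lt_or_ge c g with h | h
  · rcases eq_or_lt_of_le hc1 with h1 | h1
    · exact ⟨baseFn g, m - g, by omega, by rw [← h1]; exact hbs⟩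
    · obtain ⟨a', h', -, -⟩ := hbs.extendStep (p := c) (q := 0) (u := 0) (v := 0)
        (Nat.zero_le _) (Nat.zero_le _) (by omega) (by omega)
      refine ⟨a', m - g + 1, le_rfl, ?_⟩
      have : c * baseFn g 0 + 0 * baseFn g 0 = c := by simp [baseFn]
      rwa [this] at h'
  · refine ⟨baseFn g, m - g, by omega, hbs.1, hbs.2.1, hbs.2.2.1, c - g + 1, by omega, ?_⟩
    show (if c - g + 1 = 0 then 1 else g + (c - g + 1) - 1) = c
    rw [if_neg (by omega)]
    omega

lemma foldl_digits (m : ℕ) :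
    ∀ (L : List ℕ) (w : ℕ), List.foldl (fun acc c => acc * m + c) w L
      = w * m ^ L.length + Nat.ofDigits m L.reverse := by
  intro L
  induction L with
  | nil => intro w; simp [Nat.ofDigits]
  | cons c L ih =>
    intro w
    rw [List.foldl_cons, ih (w * m + c)]
    simp only [List.reverse_cons, List.length_cons, Nat.ofDigits_append]
    rw [Nat.ofDigits_singleton]
    rw [List.length_reverse]
    ring

end GAdd

/-- for integers `g ≥ 2`, `s ≥ 1`, `m = g ^ s` and `d ≥ 2`,
`l_g(d) ≤ (m - g) + ⌊log_g d⌋ + μ_m(d)`. -/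
theorem gAddChainLength_le_gpow_ary (g s m d : ℕ) (hg : 2 ≤ g) (hs : 1 ≤ s)
    (hm : m = g ^ s) (hd : 2 ≤ d) :
    gAddChainLength g d ≤ (m - g) + Nat.log g d + nonzeroDigits m d := by
  have hg1 : 1 < g := hg
  have hgm : g ≤ m := by rw [hm]; exact Nat.le_self_pow (by omega) g
  have hm1 : 1 < m := by omega
  have hd0 : d ≠ 0 := by omega
  have hDne : Nat.digits m d ≠ [] := Nat.digits_ne_nil_iff_ne_zero.mpr hd0
  have hctne : (Nat.digits m d).getLast hDne ≠ 0 := Nat.getLast_digit_ne_zero m hd0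
  have hctmem : (Nat.digits m d).getLast hDne ∈ Nat.digits m d := List.getLast_mem hDne
  have hctm : (Nat.digits m d).getLast hDne < m := Nat.digits_lt_base hm1 hctmem
  obtain ⟨a₀, r₀, hr₀, hst₀⟩ := GAdd.init_top hg hgm (by omega) hctm
  have hLlt : ∀ x ∈ (Nat.digits m d).dropLast.reverse, x < m := by
    intro x hx
    rw [List.mem_reverse] at hx
    exact Nat.digits_lt_base hm1 (List.dropLast_subset _ hx)
  obtain ⟨a₁, h₁⟩ := GAdd.horner hg hgm hs hm _ hLlt a₀ r₀ _ hst₀ (by omega)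
  have hfold : List.foldl (fun acc c => acc * m + c) ((Nat.digits m d).getLast hDne)
      ((Nat.digits m d).dropLast.reverse) = d := by
    rw [GAdd.foldl_digits, List.reverse_reverse, List.length_reverse]
    conv_rhs => rw [← Nat.ofDigits_digits m d, ← List.dropLast_append_getLast hDne]
    rw [Nat.ofDigits_append, Nat.ofDigits_singleton]
    ring
  have hlen : (Nat.digits m d).length = Nat.log m d + 1 := Nat.digits_len m d hm1 hd0
  have hLlen : (Nat.digits m d).dropLast.reverse.length = Nat.log m d := by
    rw [List.length_reverse, List.length_dropLast, hlen]
    simp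
  have hmu : nonzeroDigits m d
      = ((Nat.digits m d).dropLast.reverse.filter (· ≠ 0)).length + 1 := by
    rw [nonzeroDigits]
    conv_lhs => rw [← List.dropLast_append_getLast hDne]
    rw [List.filter_append, List.length_append, List.filter_reverse, List.length_reverse]
    simp [hctne]
  have hlog : s * Nat.log m d ≤ Nat.log g d := by
    rw [Nat.le_log_iff_pow_le hg1 hd0, pow_mul, ← hm]
    exact Nat.pow_log_le_self m hd0
  obtain ⟨pre, hmg', hbase', iw, hiw, hval⟩ := h₁
  rw [hfold] at hval
  have hchain : IsGAddChain g a₁ iw d :=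
    ⟨pre.1, hval, fun i h1 h2 => pre.2 i h1 (by omega)⟩
  have hle : gAddChainLength g d ≤ iw := Nat.sInf_le ⟨a₁, hchain⟩
  rw [hmu]
  rw [hLlen] at hiw
  omega
end

section
/- Let g ≥ 2 be an integer. For every integer k ≥ 1 and every integer n ≥ 2, l_g(n) ≤ g^k + ((k+1)/k) · log_g n. -/
/-- A list is a valid `g`-addition chain read positionally. -/
def chainOK (g : ℕ) (l : List ℕ) : Prop :=
  ∀ i, 1 ≤ i → i < l.length →
    ∃ k, 2 ≤ k ∧ k ≤ g ∧
      ∃ j : Fin k → ℕ, Monotone j ∧ (∀ t, j t ≤ i - 1) ∧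
        l.getD i 0 = ∑ t, l.getD (j t) 0

lemma getD_concat_self (l : List ℕ) (x : ℕ) : (l ++ [x]).getD l.length 0 = x := by
  rw [List.getD_append_right _ _ _ _ (le_refl _)]
  simp

lemma chainOK_snoc {g : ℕ} {l : List ℕ} (hl : chainOK g l) (x : ℕ)
    (h : ∃ k, 2 ≤ k ∧ k ≤ g ∧ ∃ j : Fin k → ℕ, Monotone j ∧ (∀ t, j t < l.length) ∧
      x = ∑ t, l.getD (j t) 0) :
    chainOK g (l ++ [x]) := by
  intro i hi hilen
  rw [List.length_append, List.length_singleton] at hilen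
  rcases lt_or_eq_of_le (Nat.lt_succ_iff.mp hilen) with hlt | heq
  · obtain ⟨kk, hk2, hkg, j, hmono, hjle, hsum⟩ := hl i hi hlt
    refine ⟨kk, hk2, hkg, j, hmono, hjle, ?_⟩
    rw [List.getD_append _ _ _ _ hlt, hsum]
    refine Finset.sum_congr rfl fun t _ => ?_
    exact (List.getD_append _ _ _ _ (by have := hjle t; omega)).symm
  · obtain ⟨kk, hk2, hkg, j, hmono, hjlt, hsum⟩ := h
    refine ⟨kk, hk2, hkg, j, hmono, fun t => by have := hjlt t; omega, ?_⟩
    rw [heq, getD_concat_self, hsum]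
    refine Finset.sum_congr rfl fun t _ => ?_
    exact (List.getD_append _ _ _ _ (hjlt t)).symm

lemma getD_range'_one (c i : ℕ) (h : i < c) : (List.range' 1 c).getD i 0 = i + 1 := by
  rw [List.getD_eq_getElem _ _ (by simpa using h)]
  rw [List.getElem_range']
  omega

lemma chainOK_range' {g : ℕ} (hg : 2 ≤ g) (c : ℕ) : chainOK g (List.range' 1 c) := by
  intro i hi hilen
  rw [List.length_range'] at hilen
  refine ⟨2, le_refl 2, hg, ![0, i - 1], ?_, ?_, ?_⟩
  · intro x y hxy
    fin_cases x <;> fin_cases y <;> simp_all <;> omega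
  · intro t; fin_cases t <;> simp
  · rw [Fin.sum_univ_two]
    simp only [Matrix.cons_val_zero, Matrix.cons_val_one, Matrix.head_cons]
    rw [getD_range'_one c i hilen, getD_range'_one c 0 (by omega),
      getD_range'_one c (i - 1) (by omega)]
    omega

lemma chainOK_snoc_two {g : ℕ} (hg : 2 ≤ g) {l : List ℕ} (hl : chainOK g l)
    {p q : ℕ} (hpq : p ≤ q) (hq : q < l.length) :
    chainOK g (l ++ [l.getD p 0 + l.getD q 0]) := by
  apply chainOK_snoc hl
  refine ⟨2, le_refl 2, hg, ![p, q], ?_, ?_, ?_⟩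
  · intro x y hxy
    fin_cases x <;> fin_cases y <;> simp_all <;> omega
  · intro t; fin_cases t <;> simp <;> omega
  · rw [Fin.sum_univ_two]
    simp

lemma chainOK_snoc_mul {g : ℕ} (hg : 2 ≤ g) {l : List ℕ} (hl : chainOK g l)
    {p : ℕ} (hp : p < l.length) :
    chainOK g (l ++ [g * l.getD p 0]) := by
  apply chainOK_snoc hl
  refine ⟨g, hg, le_refl g, fun _ => p, monotone_const, fun _ => hp, ?_⟩
  rw [Finset.sum_const, Finset.card_univ, Fintype.card_fin, smul_eq_mul]

lemma chainOK_mul_iter {g : ℕ} (hg : 2 ≤ g) :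
    ∀ (s : ℕ) {l : List ℕ}, chainOK g l → 0 < l.length →
    ∃ l' : List ℕ, chainOK g l' ∧ l'.length = l.length + s ∧
      l'.getD (l'.length - 1) 0 = g ^ s * l.getD (l.length - 1) 0 ∧
      ∃ l₂, l' = l ++ l₂ := by
  intro s
  induction s with
  | zero => intro l hl hne; exact ⟨l, hl, rfl, by simp, [], by simp⟩
  | succ s ih =>
    intro l hl hne
    obtain ⟨l', h1, h2, h3, l₂, h4⟩ := ih hl hne
    have hlen : 0 < l'.length := by omega
    refine ⟨l' ++ [g * l'.getD (l'.length - 1) 0], chainOK_snoc_mul hg h1 (by omega),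
      by simp [h2]; omega, ?_, l₂ ++ [g * l'.getD (l'.length - 1) 0], by rw [h4, List.append_assoc]⟩
    have hL : (l' ++ [g * l'.getD (l'.length - 1) 0]).length = l'.length + 1 := by simp
    rw [hL, Nat.add_sub_cancel, getD_concat_self, h3, pow_succ]
    ring

/-- The main construction: the `g^k`-ary method chain for a digit list. -/
lemma build {g k : ℕ} (hg : 2 ≤ g) (hk : 1 ≤ k) :
    ∀ (ds : List ℕ) (hne : ds ≠ []), (∀ d ∈ ds, d < g ^ k) → ds.getLast hne ≠ 0 →
    ∃ l : List ℕ, chainOK g l ∧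
      (∀ i, i < g ^ k - 1 → l.getD i 0 = i + 1) ∧
      g ^ k - 1 ≤ l.length ∧
      l.length ≤ (g ^ k - 1) + (ds.length - 1) * (k + 1) ∧
      ∃ p, p < l.length ∧ l.getD p 0 = Nat.ofDigits (g ^ k) ds ∧
        (2 ≤ ds.length → p = l.length - 1) := by
  have hm : 2 ≤ g ^ k := le_trans hg (Nat.le_self_pow (by omega) g)
  intro ds
  induction ds with
  | nil => intro hne; exact absurd rfl hne
  | cons d rest ih =>
    intro hne hlt hlast
    rcases eq_or_ne rest [] with hr | hr
    · -- base case: single digit d, chain is [1, 2, ..., g^k - 1]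
      subst hr
      simp only [List.getLast_singleton] at hlast
      have hd : d < g ^ k := hlt d (by simp)
      refine ⟨List.range' 1 (g ^ k - 1), chainOK_range' hg _,
        fun i hi => getD_range'_one _ i hi, by simp, by simp, d - 1, ?_, ?_, by simp⟩
      · rw [List.length_range']; omega
      · rw [getD_range'_one _ _ (by omega), Nat.ofDigits_singleton]
        omega
    · -- inductive step
      have hlast' : rest.getLast hr ≠ 0 := by
        rwa [List.getLast_cons hr] at hlast
      obtain ⟨l, hOK, hpre, hlo, hhi, p, hp, hval, -⟩ :=
        ih hr (fun x hx => hlt x (by simp [hx])) hlast'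
      set m := g ^ k with hmdef
      set V := Nat.ofDigits m rest with hV
      -- step 1: multiply by g once from position p
      have h1 : chainOK g (l ++ [g * l.getD p 0]) := chainOK_snoc_mul hg hOK hp
      have h1len : (l ++ [g * l.getD p 0]).length = l.length + 1 := by simp
      have h1last : (l ++ [g * l.getD p 0]).getD ((l ++ [g * l.getD p 0]).length - 1) 0
          = g * V := by
        rw [h1len, Nat.add_sub_cancel, getD_concat_self, hval]
      -- step 2: multiply by g, (k-1) more times
      obtain ⟨l2, h2OK, h2len, h2last, l₂, h2ext⟩ :=
        chainOK_mul_iter hg (k - 1) h1 (by omega)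
      have h2len' : l2.length = l.length + k := by omega
      have h2last' : l2.getD (l2.length - 1) 0 = m * V := by
        rw [h2last, h1last, ← mul_assoc, ← pow_succ]
        congr 2
        omega
      have h2pre : ∀ i, i < m - 1 → l2.getD i 0 = i + 1 := by
        intro i hi
        rw [h2ext, List.append_assoc, List.getD_append _ _ _ _ (by omega)]
        exact hpre i hi
      rcases eq_or_ne d 0 with hd0 | hd0
      · -- digit is 0: no addition step needed
        refine ⟨l2, h2OK, h2pre, by omega, ?_, l2.length - 1, by omega, ?_, fun _ => rfl⟩
        · rw [h2len']
          simp only [List.length_cons]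
          have hrl : 1 ≤ rest.length := List.length_pos_iff.mpr hr
          obtain ⟨B, hB⟩ : ∃ B, rest.length = B + 1 := ⟨rest.length - 1, by omega⟩
          obtain ⟨A, hA⟩ : ∃ A, (rest.length - 1) * (k + 1) = A := ⟨_, rfl⟩
          have key : (rest.length + 1 - 1) * (k + 1) = A + (k + 1) := by
            rw [← hA, hB]
            simp [Nat.add_sub_cancel]
            ring
          rw [hA] at hhi
          rw [key]
          omega
        · rw [h2last', Nat.ofDigits_cons, hd0]
          simp
          exact Or.inl rfl
      · -- digit is nonzero: add it using the precomputed value at index d - 1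
        have hd : d < m := hlt d (by simp)
        have hd1 : d - 1 < m - 1 := by omega
        have hd1l : d - 1 < l2.length := by omega
        have hpq : d - 1 ≤ l2.length - 1 := by omega
        have h3 := chainOK_snoc_two hg h2OK hpq (by omega)
        set x := l2.getD (d - 1) 0 + l2.getD (l2.length - 1) 0 with hx
        refine ⟨l2 ++ [x], h3, ?_, by simp; omega, ?_, (l2 ++ [x]).length - 1, by simp, ?_, fun _ => rfl⟩
        · intro i hi
          rw [List.getD_append _ _ _ _ (by omega)]
          exact h2pre i hi
        · simp only [List.length_append, List.length_singleton, List.length_cons, List.length_nil, h2len']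
          have hrl : 1 ≤ rest.length := List.length_pos_iff.mpr hr
          obtain ⟨B, hB⟩ : ∃ B, rest.length = B + 1 := ⟨rest.length - 1, by omega⟩
          obtain ⟨A, hA⟩ : ∃ A, (rest.length - 1) * (k + 1) = A := ⟨_, rfl⟩
          have key : (rest.length + 1 - 1) * (k + 1) = A + (k + 1) := by
            rw [← hA, hB]
            simp [Nat.add_sub_cancel]
            ring
          rw [hA] at hhi
          rw [key]
          omega
        · have hlen3 : (l2 ++ [x]).length = l2.length + 1 := by simp
          have hd' : d - 1 + 1 = d := by omega
          rw [hlen3, Nat.add_sub_cancel, getD_concat_self, hx, h2pre (d - 1) hd1, h2last',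
            Nat.ofDigits_cons]
          simp [hd']
          exact Or.inl rfl

lemma gAddChainLength_le_of_chainOK {g : ℕ} {l : List ℕ} (hl : chainOK g l)
    (h0 : l.getD 0 0 = 1) (hne : 0 < l.length) :
    gAddChainLength g (l.getD (l.length - 1) 0) ≤ l.length - 1 := by
  apply Nat.sInf_le
  exact ⟨fun i => l.getD i 0, h0, rfl, fun i hi hir => hl i hi (by omega)⟩

/-- for integers `g ≥ 2`, `k ≥ 1` and `n ≥ 2`,
`l_g(n) ≤ g ^ k + ((k + 1) / k) * log_g n` (real logarithm in base `g`). -/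
theorem gAddChainLength_le_pow_add (g k n : ℕ) (hg : 2 ≤ g) (hk : 1 ≤ k) (hn : 2 ≤ n) :
    (gAddChainLength g n : ℝ) ≤
      (g : ℝ) ^ k + (((k : ℝ) + 1) / (k : ℝ)) * Real.logb g n := by
  have hm : 2 ≤ g ^ k := le_trans hg (Nat.le_self_pow (by omega) g)
  have hg1 : (1 : ℝ) < g := by exact_mod_cast by omega
  have hlogb : 0 ≤ Real.logb g n := Real.logb_nonneg hg1 (by exact_mod_cast by omega)
  set m := g ^ k with hmdef
  have hn0 : n ≠ 0 := by omega
  set ds := Nat.digits m n with hds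
  have hdsne : ds ≠ [] := Nat.digits_ne_nil_iff_ne_zero.mpr hn0
  have hdslt : ∀ d ∈ ds, d < m := fun d hd => Nat.digits_lt_base (by omega) hd
  have hdslast : ds.getLast hdsne ≠ 0 := Nat.getLast_digit_ne_zero m hn0
  rcases lt_or_ge n m with hnm | hnm
  · -- n < m : use the chain [1, 2, ..., n]
    have hc := chainOK_range' hg n
    have hlen : (List.range' 1 n).length = n := by simp
    have := gAddChainLength_le_of_chainOK hc
      (by rw [getD_range'_one n 0 (by omega)]) (by omega)
    rw [hlen, getD_range'_one n (n - 1) (by omega)] at this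
    have h2 : n - 1 + 1 = n := by omega
    rw [h2] at this
    have : (gAddChainLength g n : ℝ) ≤ (n - 1 : ℕ) := by exact_mod_cast this
    refine le_trans this ?_
    have : ((n - 1 : ℕ) : ℝ) ≤ ((m : ℕ) : ℝ) := by
      exact_mod_cast (by omega : n - 1 ≤ m)
    refine le_trans this ?_
    rw [hmdef]
    push_cast
    have hk0 : (0 : ℝ) < k := by exact_mod_cast hk
    have : 0 ≤ (((k : ℝ) + 1) / k) * Real.logb g n := by positivity
    linarith
  · -- m ≤ n : use the m-ary method
    have hds2 : 2 ≤ ds.length := by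
      by_contra h
      push_neg at h
      interval_cases hl : ds.length
      · exact hdsne (List.length_eq_zero_iff.mp hl)
      · obtain ⟨d, hd⟩ := List.length_eq_one_iff.mp hl
        have : n = Nat.ofDigits m ds := (Nat.ofDigits_digits m n).symm
        rw [hd, Nat.ofDigits_singleton] at this
        have := hdslt d (by rw [hd]; simp)
        omega
    obtain ⟨l, hOK, hpre, hlo, hhi, p, hp, hval, hplast⟩ := build hg hk ds hdsne hdslt hdslast
    rw [Nat.ofDigits_digits] at hval
    have hp' : p = l.length - 1 := hplast hds2
    have h0 : l.getD 0 0 = 1 := hpre 0 (by omega)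
    have hchain := gAddChainLength_le_of_chainOK hOK h0 (by omega)
    rw [← hp', hval] at hchain
    set t := ds.length - 1 with ht
    have hr : gAddChainLength g n ≤ m - 2 + t * (k + 1) := by
      have : l.length ≤ (m - 1) + t * (k + 1) := hhi
      omega
    -- key: m ^ t ≤ n
    have hpow : m ^ t ≤ n := by
      have h1 : m ^ ds.length ≤ m * n := Nat.base_pow_length_digits_le m n (by omega) hn0
      have h2 : ds.length = t + 1 := by omega
      rw [h2, pow_succ] at h1
      calc m ^ t = m * m ^ t / m := by rw [Nat.mul_div_cancel_left _ (by omega : 0 < m)]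
        _ ≤ m * n / m := by
            apply Nat.div_le_div_right
            calc m * m ^ t = m ^ t * m := mul_comm _ _
              _ ≤ m * n := h1
        _ = n := Nat.mul_div_cancel_left _ (by omega : 0 < m)
    have hkt : (t : ℝ) * k ≤ Real.logb g n := by
      have h1 : ((m ^ t : ℕ) : ℝ) ≤ (n : ℝ) := by exact_mod_cast hpow
      have h2 : Real.logb g ((m ^ t : ℕ) : ℝ) ≤ Real.logb g n := by
        apply (Real.logb_le_logb hg1 (by positivity) (by exact_mod_cast by omega : (0:ℝ) < n)).mpr h1
      have h3 : ((m ^ t : ℕ) : ℝ) = (g : ℝ) ^ (k * t) := by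
        rw [hmdef]
        push_cast
        rw [← pow_mul]
      rw [h3, Real.logb_pow, Real.logb_self_eq_one hg1, mul_one] at h2
      push_cast at h2
      linarith
    have hk0 : (0 : ℝ) < k := by exact_mod_cast hk
    have hc : (gAddChainLength g n : ℝ) ≤ ((m - 2 + t * (k + 1) : ℕ) : ℝ) :=
      Nat.cast_le.mpr hr
    have hcast : ((m - 2 + t * (k + 1) : ℕ) : ℝ) = (m : ℝ) - 2 + t * (k + 1) := by
      rw [Nat.cast_add, Nat.cast_sub (by omega : 2 ≤ m), Nat.cast_mul]
      push_cast
      ring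
    have hmg : (m : ℝ) = (g : ℝ) ^ k := by rw [hmdef]; push_cast; ring
    have hmain : (t : ℝ) * (k + 1) ≤ (((k : ℝ) + 1) / k) * Real.logb g n := by
      have heq : (t : ℝ) * (k + 1) = (((k : ℝ) + 1) / k) * ((t : ℝ) * k) := by
        field_simp
      rw [heq]
      exact mul_le_mul_of_nonneg_left hkt (by positivity)
    rw [hcast] at hc
    linarith
end

section
/- Let g ≥ 2 be an integer. Then l_g(n) ≤ λ_g(n) + (1 + o(1)) · λ_g(n)/λ_g(λ_g(n)) as n → ∞; precisely, for every ε > 0 there exists N such that for all integers n ≥ N, l_g(n) ≤ λ_g(n) + (1 + ε) · λ_g(n)/λ_g(λ_g(n)). -/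
lemma mono_pair {p q : ℕ} (h : p ≤ q) : Monotone ![p, q] := by
  intro x y hxy
  fin_cases x <;> fin_cases y <;> simp_all

lemma chain_exists (g t : ℕ) (hg : 2 ≤ g) (ht : 1 ≤ t) :
    ∀ n, 1 ≤ n → ∃ (r : ℕ) (a : ℕ → ℕ) (i₀ : ℕ), i₀ ≤ r ∧ a i₀ = n ∧ (g ^ t ≤ n → i₀ = r) ∧
      (a 0 = 1 ∧ ∀ i, 1 ≤ i → i ≤ r → ∃ k, 2 ≤ k ∧ k ≤ g ∧
        ∃ j : Fin k → ℕ, Monotone j ∧ (∀ s, j s ≤ i - 1) ∧ a i = ∑ s, a (j s)) ∧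
      (∀ c, 1 ≤ c → c ≤ g ^ t - 1 → a (c - 1) = c) ∧
      g ^ t - 2 ≤ r ∧ r ≤ (g ^ t - 2) + Nat.log (g ^ t) n * (t + 1) := by
  have hm : 2 ≤ g ^ t := le_trans hg (Nat.le_self_pow (by omega) g)
  intro n
  induction n using Nat.strong_induction_on with
  | _ n IH =>
  intro hn
  set m := g ^ t with hmdef
  by_cases hcase : n < m
  · -- base case
    refine ⟨m - 2, fun i => i + 1, n - 1, by omega, by show n - 1 + 1 = n; omega, by omega, ⟨rfl, ?_⟩,
      fun c hc1 hc2 => by show c - 1 + 1 = c; omega, le_refl _, ?_⟩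
    · intro i hi1 hi2
      refine ⟨2, le_refl _, hg, ![0, i - 1], mono_pair (Nat.zero_le _), ?_, ?_⟩
      · intro s; fin_cases s <;> simp
      · simp [Fin.sum_univ_two]; omega
    · have : Nat.log m n = 0 := Nat.log_eq_zero_iff.mpr (Or.inl hcase)
      omega
  · -- inductive step
    push_neg at hcase
    set q := n / m with hq
    set d := n % m with hd
    have hdm : m * q + d = n := Nat.div_add_mod n m
    have hd_lt : d < m := Nat.mod_lt n (by omega)
    have hq1 : 1 ≤ q := (Nat.one_le_div_iff (by omega)).mpr hcase
    have hqn : q < n := Nat.div_lt_self (by omega) (by omega)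
    obtain ⟨r, a, i₀, hi₀r, hai₀, _, ⟨ha0, hstep⟩, hpre, hr1, hr2⟩ := IH q hqn hq1
    set b : ℕ → ℕ := fun i => if i ≤ r then a i else if i ≤ r + t then q * g ^ (i - r) else n
      with hb
    have hbr : ∀ i, i ≤ r → b i = a i := fun i hi => if_pos hi
    have hbmul : ∀ s, 1 ≤ s → s ≤ t → b (r + s) = q * g ^ s := by
      intro s h1 h2
      have : ¬ (r + s ≤ r) := by omega
      simp only [hb, this, if_false, if_pos (by omega : r + s ≤ r + t)]
      have hrs : r + s - r = s := by omega
      rw [hrs]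
    have hbend : b (r + t) = q * m := hbmul t ht (le_refl _)
    have hstep' : ∀ i, 1 ≤ i → i ≤ r + t → ∃ k, 2 ≤ k ∧ k ≤ g ∧
        ∃ j : Fin k → ℕ, Monotone j ∧ (∀ s, j s ≤ i - 1) ∧ b i = ∑ s, b (j s) := by
      intro i hi1 hi2
      by_cases hir : i ≤ r
      · obtain ⟨k, hk1, hk2, j, hjm, hjb, hje⟩ := hstep i hi1 hir
        refine ⟨k, hk1, hk2, j, hjm, hjb, ?_⟩
        rw [hbr i hir, hje]
        exact Finset.sum_congr rfl fun s _ => (hbr (j s) (by have := hjb s; omega)).symm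
      · push_neg at hir
        set s := i - r with hs
        have hs1 : 1 ≤ s := by omega
        have hs2 : s ≤ t := by omega
        set p : ℕ := if s = 1 then i₀ else i - 1 with hp
        have hple : p ≤ i - 1 := by
          rw [hp]; split <;> omega
        have hbp : b p = q * g ^ (s - 1) := by
          rw [hp]
          split
          · rw [hbr i₀ hi₀r, hai₀]
            simp [show s - 1 = 0 by omega]
          · have : i - 1 = r + (s - 1) := by omega
            rw [this, hbmul (s - 1) (by omega) (by omega)]
        refine ⟨g, hg, le_refl _, fun _ => p, monotone_const, fun _ => hple, ?_⟩
        have hbi : b i = q * g ^ s := by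
          have : i = r + s := by omega
          rw [this, hbmul s hs1 hs2]
        rw [hbi, Finset.sum_const, Finset.card_univ, Fintype.card_fin, smul_eq_mul, hbp]
        have hss : s - 1 + 1 = s := by omega
        calc q * g ^ s = q * g ^ (s - 1 + 1) := by rw [hss]
          _ = g * (q * g ^ (s - 1)) := by rw [pow_succ]; ring
    have hprefix : ∀ c, 1 ≤ c → c ≤ m - 1 → b (c - 1) = c := by
      intro c hc1 hc2
      rw [hbr (c - 1) (by omega), hpre c hc1 hc2]
    have hlog : Nat.log m n = Nat.log m q + 1 := by
      have h1 : Nat.log m q = Nat.log m n - 1 := by rw [hq, Nat.log_div_base]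
      have h2 : 0 < Nat.log m n := Nat.log_pos (by omega) hcase
      omega
    by_cases hd0 : d = 0
    · refine ⟨r + t, b, r + t, le_refl _, ?_, fun _ => rfl, ⟨by rw [hbr 0 (by omega)]; exact ha0, hstep'⟩,
        hprefix, by omega, ?_⟩
      · rw [hbend, mul_comm]; omega
      · rw [hlog]
        set P := Nat.log m q with hP
        have : (P + 1) * (t + 1) = P * (t + 1) + t + 1 := by ring
        omega
    · refine ⟨r + t + 1, b, r + t + 1, le_refl _, ?_, fun _ => rfl, ⟨by rw [hbr 0 (by omega)]; exact ha0, ?_⟩,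
        hprefix, by omega, ?_⟩
      · show b (r + t + 1) = n
        simp only [hb, if_neg (by omega : ¬ (r + t + 1 ≤ r)), if_neg (by omega : ¬ (r + t + 1 ≤ r + t))]
      · intro i hi1 hi2
        by_cases hit : i ≤ r + t
        · exact hstep' i hi1 hit
        · have hieq : i = r + t + 1 := by omega
          have hd1 : d - 1 ≤ r + t := by omega
          refine ⟨2, le_refl _, hg, ![d - 1, r + t], mono_pair hd1, ?_, ?_⟩
          · intro s; fin_cases s <;> simp <;> omega
          · have hbd : b (d - 1) = d := by
              rw [hbr (d - 1) (by omega)]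
              exact hpre d (by omega) (by omega)
            have hbi : b i = n := by
              simp only [hb, if_neg (by omega : ¬ (i ≤ r)), if_neg (by omega : ¬ (i ≤ r + t))]
            have hsum : ∑ s : Fin 2, b (![d - 1, r + t] s) = b (d - 1) + b (r + t) := by
              simp [Fin.sum_univ_two]
            rw [hbi, hsum, hbd, hbend, mul_comm q m]
            omega
      · rw [hlog]
        set P := Nat.log m q with hP
        have : (P + 1) * (t + 1) = P * (t + 1) + t + 1 := by ring
        omega

lemma chainLength_le (g t n : ℕ) (hg : 2 ≤ g) (ht : 1 ≤ t) (hn : g ^ t ≤ n) :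
    gAddChainLength g n ≤ g ^ t + Nat.log (g ^ t) n * (t + 1) := by
  obtain ⟨r, a, i₀, _, hai, hfin, ⟨h0, hstep⟩, _, _, hr2⟩ :=
    chain_exists g t hg ht n (by have : 2 ≤ g ^ t := le_trans hg (Nat.le_self_pow (by omega) g); omega)
  have hi : i₀ = r := hfin hn
  have hchain : IsGAddChain g a r n := ⟨h0, by rw [← hi]; exact hai, hstep⟩
  exact le_trans (Nat.sInf_le ⟨a, hchain⟩) (by omega)


-- growth lemmas
lemma aux0 : ∀ c : ℕ, c * (2 * c + 3) ≤ 2 ^ (2 * c + 2) := by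
  intro c
  induction c with
  | zero => norm_num
  | succ c ih =>
    have h4 : 2 ^ (2 * (c + 1) + 2) = 4 * 2 ^ (2 * c + 2) := by ring
    rw [h4]
    have h5 : 4 ≤ 2 ^ (2 * c + 2) := by
      calc (4:ℕ) = 2 ^ 2 := by norm_num
        _ ≤ 2 ^ (2 * c + 2) := Nat.pow_le_pow_right (by norm_num) (by omega)
    nlinarith [ih, h5]

lemma pow_aux (c K : ℕ) (hK : 2 * c + 2 ≤ K) : c * (K + 1) ≤ 2 ^ K := by
  induction K, hK using Nat.le_induction with
  | base => have := aux0 c; linarith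
  | succ K hK ih =>
    have h1 : c * (K + 1) ≤ 2 ^ K := ih
    have h2 : c ≤ 2 ^ K := le_trans (by nlinarith) h1
    have : (2:ℕ) ^ (K + 1) = 2 ^ K + 2 ^ K := by ring
    rw [this]
    nlinarith

lemma log_growth (g c L : ℕ) (hg : 2 ≤ g) (hL : g ^ (4 * c + 2) ≤ L) :
    c * (2 * Nat.log g L + 2) ≤ L := by
  have hL0 : L ≠ 0 := by
    have := Nat.one_le_pow (4 * c + 2) g (by omega)
    omega
  have hK : 4 * c + 2 ≤ Nat.log g L := (Nat.le_log_iff_pow_le (by omega) hL0).mpr hL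
  set K := Nat.log g L with hKd
  have h1 : 2 * c * (K + 1) ≤ 2 ^ K := pow_aux (2 * c) K (by omega)
  have h2 : (2:ℕ) ^ K ≤ g ^ K := Nat.pow_le_pow_left hg K
  have h3 : g ^ K ≤ L := Nat.pow_log_le_self g hL0
  nlinarith


/-- for an integer `g ≥ 2`,
`l_g(n) ≤ λ_g(n) + (1 + o(1)) * λ_g(n) / λ_g(λ_g(n))`: for every `ε > 0` there is `N`
such that for all `n ≥ N`, `l_g(n) ≤ λ_g(n) + (1 + ε) * λ_g(n) / λ_g(λ_g(n))`. -/
theorem gAddChainLength_asymptotic_upper (g : ℕ) (hg : 2 ≤ g) :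
    ∀ ε : ℝ, 0 < ε → ∃ N : ℕ, ∀ n : ℕ, N ≤ n →
      (gAddChainLength g n : ℝ) ≤
        (Nat.log g n : ℝ) +
          (1 + ε) * (Nat.log g n : ℝ) / (Nat.log g (Nat.log g n) : ℝ) := by
  intro ε hε
  set c₁ : ℕ := ⌈2 / ε⌉₊ + 1 with hc₁
  set L₀ : ℕ := max (g ^ (4 * c₁ + 2)) (⌈2 * (g:ℝ) / ε⌉₊ + 1) with hL₀
  refine ⟨g ^ (g ^ L₀), fun n hn => ?_⟩
  have hg1 : 1 < g := hg
  set lam := Nat.log g n with hlam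
  set L := Nat.log g lam with hL
  set K := Nat.log g L with hK
  have hn0 : n ≠ 0 := by
    have := Nat.one_le_pow (g ^ L₀) g (by omega); omega
  have hlam_ge : g ^ L₀ ≤ lam := by
    calc g ^ L₀ = Nat.log g (g ^ (g ^ L₀)) := (Nat.log_pow hg1 _).symm
      _ ≤ lam := Nat.log_mono_right hn
  have hlam0 : lam ≠ 0 := by
    have := Nat.one_le_pow L₀ g (by omega); omega
  have hL_ge : L₀ ≤ L := by
    calc L₀ = Nat.log g (g ^ L₀) := (Nat.log_pow hg1 _).symm
      _ ≤ L := Nat.log_mono_right hlam_ge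
  have hgrow : c₁ * (2 * K + 2) ≤ L :=
    log_growth g c₁ L hg (le_trans (le_max_left _ _) hL_ge)
  have hKL : 2 * K + 2 ≤ L := by
    have h1 : 1 * (2 * K + 2) ≤ c₁ * (2 * K + 2) := Nat.mul_le_mul_right _ (by omega)
    omega
  set t := L - (2 * K + 1) with htd
  have ht1 : 1 ≤ t := by omega
  have hteq : t + (2 * K + 1) = L := by omega
  have hgL : g ^ L ≤ lam := Nat.pow_log_le_self g hlam0
  have hgt_le : g ^ t ≤ n := by
    calc g ^ t ≤ g ^ L := Nat.pow_le_pow_right (by omega) (by omega)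
      _ ≤ lam := hgL
      _ ≤ n := Nat.log_le_self g n
  have hbound := chainLength_le g t n hg ht1 hgt_le
  set s := Nat.log (g ^ t) n with hs
  have hts : t * s ≤ lam := by
    have h1 : (g ^ t) ^ s ≤ n := Nat.pow_log_le_self (g ^ t) hn0
    rw [← pow_mul] at h1
    exact (Nat.le_log_iff_pow_le hg1 hn0).mpr h1
  have hmL : g ^ t * L ^ 2 ≤ g * lam := by
    have h1 : L < g ^ (K + 1) := Nat.lt_pow_succ_log_self hg1 L
    have h2 : g ^ t * L ^ 2 ≤ g ^ t * (g ^ (K + 1)) ^ 2 :=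
      Nat.mul_le_mul_left _ (Nat.pow_le_pow_left (le_of_lt h1) 2)
    have h3 : g ^ t * (g ^ (K + 1)) ^ 2 = g ^ (t + (K + 1) * 2) := by
      rw [← pow_mul, ← pow_add]
    have h4 : t + (K + 1) * 2 = L + 1 := by omega
    have h5 : g ^ (L + 1) = g * g ^ L := by ring
    calc g ^ t * L ^ 2 ≤ g ^ (t + (K + 1) * 2) := by rw [← h3]; exact h2
      _ = g * g ^ L := by rw [h4, h5]
      _ ≤ g * lam := Nat.mul_le_mul_left g hgL
  -- move to the reals
  have hLpos : (0:ℝ) < (L:ℝ) := by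
    have : 1 ≤ L := by omega
    exact_mod_cast Nat.lt_of_lt_of_le Nat.zero_lt_one this
  have hlamnn : (0:ℝ) ≤ (lam:ℝ) := Nat.cast_nonneg _
  have htpos : (0:ℝ) < (t:ℝ) := by exact_mod_cast ht1
  have hsnn : (0:ℝ) ≤ (s:ℝ) := Nat.cast_nonneg _
  have rl : (gAddChainLength g n : ℝ) ≤ (g:ℝ) ^ t + (s:ℝ) * ((t:ℝ) + 1) := by
    have := (Nat.cast_le (α := ℝ)).mpr hbound
    push_cast at this
    linarith
  have hts' : (t:ℝ) * (s:ℝ) ≤ (lam:ℝ) := by exact_mod_cast hts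
  have hmL' : (g:ℝ) ^ t * (L:ℝ) ^ 2 ≤ (g:ℝ) * (lam:ℝ) := by exact_mod_cast hmL
  have hgrow' : (c₁:ℝ) * (2 * (K:ℝ) + 2) ≤ (L:ℝ) := by exact_mod_cast hgrow
  have htr : (t:ℝ) = (L:ℝ) - (2 * (K:ℝ) + 1) := by
    have := congrArg (Nat.cast : ℕ → ℝ) hteq
    push_cast at this
    linarith
  have hc1r : 2 / ε + 1 ≤ (c₁:ℝ) := by
    rw [hc₁]
    push_cast
    linarith [Nat.le_ceil (2 / ε)]
  have hKnn : (0:ℝ) ≤ (K:ℝ) := Nat.cast_nonneg _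
  -- (ε/2) L ≥ (1+ε/2)(2K+2)
  have e1 : (2 / ε + 1) * (2 * (K:ℝ) + 2) ≤ (L:ℝ) :=
    le_trans (mul_le_mul_of_nonneg_right hc1r (by linarith)) hgrow'
  have e2 : (1 + ε / 2) * (2 * (K:ℝ) + 2) ≤ (ε / 2) * (L:ℝ) := by
    have h := mul_le_mul_of_nonneg_left e1 (le_of_lt (half_pos hε))
    have hid : (ε / 2) * ((2 / ε + 1) * (2 * (K:ℝ) + 2)) = (1 + ε / 2) * (2 * (K:ℝ) + 2) := by
      field_simp
    linarith [h, hid.ge, hid.le]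
  -- A : L ≤ (1+ε/2) t
  have hA : (L:ℝ) ≤ (1 + ε / 2) * (t:ℝ) := by
    rw [htr]
    nlinarith [e2]
  -- g ≤ (ε/2) L
  have hgeL : (g:ℝ) ≤ (ε / 2) * (L:ℝ) := by
    have hL2 : (⌈2 * (g:ℝ) / ε⌉₊ + 1 : ℕ) ≤ L := le_trans (le_max_right _ _) hL_ge
    have h9 : 2 * (g:ℝ) / ε ≤ (L:ℝ) := by
      have h10 : ((⌈2 * (g:ℝ) / ε⌉₊ : ℝ)) ≤ (L:ℝ) := by
        have := (Nat.cast_le (α := ℝ)).mpr hL2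
        push_cast at this
        linarith
      linarith [Nat.le_ceil (2 * (g:ℝ) / ε)]
    have hid : (ε / 2) * (2 * (g:ℝ) / ε) = g := by field_simp
    have h11 : (ε / 2) * (2 * (g:ℝ) / ε) ≤ (ε / 2) * (L:ℝ) :=
      mul_le_mul_of_nonneg_left h9 (le_of_lt (half_pos hε))
    linarith [hid.le, hid.ge]
  -- s * L ≤ (1+ε/2) lam
  have sLr : (s:ℝ) * (L:ℝ) ≤ (1 + ε / 2) * (lam:ℝ) := by
    have h1 : (s:ℝ) * (L:ℝ) ≤ (s:ℝ) * ((1 + ε / 2) * (t:ℝ)) :=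
      mul_le_mul_of_nonneg_left hA hsnn
    have h2 : (s:ℝ) * ((1 + ε / 2) * (t:ℝ)) = (1 + ε / 2) * ((t:ℝ) * (s:ℝ)) := by ring
    have h3 : (1 + ε / 2) * ((t:ℝ) * (s:ℝ)) ≤ (1 + ε / 2) * (lam:ℝ) :=
      mul_le_mul_of_nonneg_left hts' (by linarith)
    linarith
  -- g^t * L ≤ (ε/2) lam
  have mLr : (g:ℝ) ^ t * (L:ℝ) ≤ (ε / 2) * (lam:ℝ) := by
    have h1 : (L:ℝ) * ((g:ℝ) ^ t * (L:ℝ)) ≤ (L:ℝ) * ((ε / 2) * (lam:ℝ)) := by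
      have ha : (L:ℝ) * ((g:ℝ) ^ t * (L:ℝ)) = (g:ℝ) ^ t * (L:ℝ) ^ 2 := by ring
      have hb : (g:ℝ) * (lam:ℝ) ≤ ((ε / 2) * (L:ℝ)) * (lam:ℝ) :=
        mul_le_mul_of_nonneg_right hgeL hlamnn
      have hc : ((ε / 2) * (L:ℝ)) * (lam:ℝ) = (L:ℝ) * ((ε / 2) * (lam:ℝ)) := by ring
      linarith [hmL']
    exact le_of_mul_le_mul_left h1 hLpos
  have h6 : (g:ℝ) ^ t ≤ (ε / 2) * (lam:ℝ) / (L:ℝ) := (le_div_iff₀ hLpos).mpr mLr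
  have h7 : (s:ℝ) ≤ (1 + ε / 2) * (lam:ℝ) / (L:ℝ) := (le_div_iff₀ hLpos).mpr sLr
  have h8 : (s:ℝ) * (t:ℝ) ≤ (lam:ℝ) := by linarith [hts', mul_comm (s:ℝ) (t:ℝ)]
  have hdiv : (1 + ε) * (lam:ℝ) / (L:ℝ) =
      (ε / 2) * (lam:ℝ) / (L:ℝ) + (1 + ε / 2) * (lam:ℝ) / (L:ℝ) := by ring
  have hexp : (s:ℝ) * ((t:ℝ) + 1) = (s:ℝ) * (t:ℝ) + (s:ℝ) := by ring
  rw [hdiv]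
  linarith [rl, h6, h7, h8, hexp.le, hexp.ge]
end

section
/- Let g ≥ 3 be an integer and let ε > 0. Then there exist a real number α < g and an integer M such that for every integer m ≥ M, the number of strictly increasing g-addition chains 1 = a_0 < a_1 < ... < a_r = n whose final term n satisfies λ_g(n) = m and whose length satisfies r ≤ m + (1−ε)m/(8g · ln(g) · λ_g(m)) is at most α^m. In particular, this count is substantially less than (g−1)g^m, the number of integers n with λ_g(n) = m. -/
/-- A `g`-addition chain presented as a list `[a 0, a 1, …, a r]`. -/
def IsGAddChainList (g : ℕ) (L : List ℕ) : Prop :=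
  L ≠ [] ∧ L.getD 0 0 = 1 ∧
  ∀ i, 1 ≤ i → i < L.length →
    ∃ k, 2 ≤ k ∧ k ≤ g ∧
      ∃ j : Fin k → ℕ, Monotone j ∧ (∀ t, j t ≤ i - 1) ∧
        L.getD i 0 = ∑ t, L.getD (j t) 0

namespace GChainAux

/-- The per-step existential in `IsGAddChainList`. -/
def chainExists (g : ℕ) (L : List ℕ) (i : ℕ) : Prop :=
  ∃ k, 2 ≤ k ∧ k ≤ g ∧ ∃ j : Fin k → ℕ, Monotone j ∧ (∀ t, j t ≤ i - 1) ∧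
    L.getD i 0 = ∑ t, L.getD (j t) 0

open Classical in
noncomputable def rule (g : ℕ) (L : List ℕ) (i : ℕ) : (k : ℕ) × (Fin k → ℕ) :=
  if h : chainExists g L i then ⟨h.choose, h.choose_spec.2.2.choose⟩ else ⟨0, Fin.elim0⟩

lemma rule_spec {g : ℕ} {L : List ℕ} {i : ℕ} (h : chainExists g L i) :
    2 ≤ (rule g L i).1 ∧ (rule g L i).1 ≤ g ∧
      (∀ t, (rule g L i).2 t ≤ i - 1) ∧
      L.getD i 0 = ∑ t, L.getD ((rule g L i).2 t) 0 := by
  unfold rule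
  rw [dif_pos h]
  exact ⟨h.choose_spec.1, h.choose_spec.2.1, h.choose_spec.2.2.choose_spec.2.1,
    h.choose_spec.2.2.choose_spec.2.2⟩

noncomputable def stepPairs (g : ℕ) (L : List ℕ) (i : ℕ) : Multiset (ℕ × ℕ) :=
  Multiset.replicate (g - (rule g L i).1) (i, 0) +
    ((Finset.univ.filter (fun t => (rule g L i).2 t < i - 1)).val.map
      fun t => (i, (rule g L i).2 t + 1))

noncomputable def chainCode (g : ℕ) (L : List ℕ) : Multiset (ℕ × ℕ) :=
  ∑ i ∈ Finset.Icc 1 (L.length - 1), stepPairs g L i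

lemma mem_stepPairs {g : ℕ} {L : List ℕ} {i : ℕ} {p : ℕ × ℕ}
    (hp : p ∈ stepPairs g L i) : p.1 = i ∧ p.2 ≤ i - 1 := by
  unfold stepPairs at hp
  rw [Multiset.mem_add] at hp
  rcases hp with hp | hp
  · rw [Multiset.eq_of_mem_replicate hp]
    exact ⟨rfl, Nat.zero_le _⟩
  · rw [Multiset.mem_map] at hp
    obtain ⟨t, ht, rfl⟩ := hp
    rw [← Finset.mem_def, Finset.mem_filter] at ht
    exact ⟨rfl, by omega⟩

lemma card_stepPairs {g : ℕ} {L : List ℕ} {i : ℕ} :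
    (stepPairs g L i).card =
      (g - (rule g L i).1) +
        (Finset.univ.filter (fun t => (rule g L i).2 t < i - 1)).card := by
  simp [stepPairs]
  rfl

lemma card_stepPairs_le {g : ℕ} {L : List ℕ} {i : ℕ} (h : chainExists g L i) :
    (stepPairs g L i).card ≤ g := by
  have hs := rule_spec h
  have h1 : (Finset.univ.filter (fun t => (rule g L i).2 t < i - 1)).card
      ≤ (rule g L i).1 := by
    calc (Finset.univ.filter (fun t => (rule g L i).2 t < i - 1)).card
        ≤ (Finset.univ : Finset (Fin (rule g L i).1)).card := Finset.card_filter_le _ _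
      _ = (rule g L i).1 := by simp
  rw [card_stepPairs]
  omega

lemma getD_lt_getD {L : List ℕ} (hs : L.Pairwise (· < ·)) {i j : ℕ} (hij : i < j)
    (hj : j < L.length) : L.getD i 0 < L.getD j 0 := by
  rw [List.getD_eq_getElem L 0 (lt_trans hij hj), List.getD_eq_getElem L 0 hj]
  exact List.pairwise_iff_getElem.mp hs i j (lt_trans hij hj) hj hij

lemma getD_le_getD {L : List ℕ} (hs : L.Pairwise (· < ·)) {i j : ℕ} (hij : i ≤ j)
    (hj : j < L.length) : L.getD i 0 ≤ L.getD j 0 := by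
  rcases eq_or_lt_of_le hij with rfl | h
  · exact le_refl _
  · exact le_of_lt (getD_lt_getD hs h hj)

lemma one_le_getD {g : ℕ} {L : List ℕ} (hch : IsGAddChainList g L)
    (hs : L.Pairwise (· < ·)) {i : ℕ} (hi : i < L.length) : 1 ≤ L.getD i 0 := by
  have h0 : L.getD 0 0 = 1 := hch.2.1
  calc 1 = L.getD 0 0 := h0.symm
    _ ≤ L.getD i 0 := getD_le_getD hs (Nat.zero_le _) hi

lemma getD_le_mul {g : ℕ} {L : List ℕ} (hch : IsGAddChainList g L)
    (hs : L.Pairwise (· < ·)) {i : ℕ} (h1 : 1 ≤ i) (h2 : i < L.length) :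
    L.getD i 0 ≤ g * L.getD (i - 1) 0 := by
  have hce : chainExists g L i := hch.2.2 i h1 h2
  obtain ⟨hk2, hkg, hjle, hsum⟩ := rule_spec hce
  have hi1 : i - 1 < L.length := lt_of_le_of_lt (Nat.sub_le _ _) h2
  rw [hsum]
  calc ∑ t, L.getD ((rule g L i).2 t) 0
      ≤ ∑ _t : Fin (rule g L i).1, L.getD (i - 1) 0 :=
        Finset.sum_le_sum fun t _ => getD_le_getD hs (hjle t) hi1
    _ = (rule g L i).1 * L.getD (i - 1) 0 := by simp [Finset.sum_const, mul_comm]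
    _ ≤ g * L.getD (i - 1) 0 := Nat.mul_le_mul_right _ hkg

lemma getD_le_pow {g : ℕ} {L : List ℕ} (hch : IsGAddChainList g L)
    (hs : L.Pairwise (· < ·)) : ∀ i, i < L.length → L.getD i 0 ≤ g ^ i := by
  intro i
  induction i with
  | zero => intro _; rw [pow_zero]; exact le_of_eq hch.2.1
  | succ n ih =>
    intro hlt
    have h1 : L.getD (n + 1) 0 ≤ g * L.getD n 0 := by
      have := getD_le_mul hch hs (Nat.le_add_left 1 n) hlt
      simpa using this
    calc L.getD (n+1) 0 ≤ g * L.getD n 0 := h1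
      _ ≤ g * g ^ n := Nat.mul_le_mul_left _ (ih (by omega))
      _ = g ^ (n+1) := by ring

lemma step_decomp {g : ℕ} {L : List ℕ} (hch : IsGAddChainList g L) {i : ℕ}
    (h1 : 1 ≤ i) (h2 : i < L.length) :
    L.getD i 0 = ((rule g L i).1 -
        (Finset.univ.filter (fun t => (rule g L i).2 t < i - 1)).card) * L.getD (i-1) 0
      + ∑ t ∈ Finset.univ.filter (fun t => (rule g L i).2 t < i - 1),
          L.getD ((rule g L i).2 t) 0 := by
  have hce : chainExists g L i := hch.2.2 i h1 h2
  obtain ⟨hk2, hkg, hjle, hsum⟩ := rule_spec hce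
  set k := (rule g L i).1
  set j := (rule g L i).2
  set nt := Finset.univ.filter (fun t => j t < i - 1) with hnt
  have hsplit : (∑ t, L.getD (j t) 0) =
      (∑ t ∈ nt, L.getD (j t) 0) + ∑ t ∈ Finset.univ.filter (fun t => ¬ (j t < i - 1)), L.getD (j t) 0 :=
    (Finset.sum_filter_add_sum_filter_not _ _ _).symm
  have hcards : nt.card + (Finset.univ.filter (fun t => ¬ (j t < i - 1))).card = k := by
    have := Finset.card_filter_add_card_filter_not
      (s := (Finset.univ : Finset (Fin k))) (p := fun t => j t < i - 1)
    simpa using this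
  have hconst : ∑ t ∈ Finset.univ.filter (fun t => ¬ (j t < i - 1)), L.getD (j t) 0
      = (k - nt.card) * L.getD (i-1) 0 := by
    have hterm : ∀ t ∈ Finset.univ.filter (fun t => ¬ (j t < i - 1)),
        L.getD (j t) 0 = L.getD (i-1) 0 := by
      intro t ht
      rw [Finset.mem_filter] at ht
      have := hjle t
      congr 1
      omega
    rw [Finset.sum_congr rfl hterm, Finset.sum_const, smul_eq_mul]
    congr 1
    omega
  rw [hsum, hsplit, hconst, add_comm]

lemma code_value {g : ℕ} {L : List ℕ} (hch : IsGAddChainList g L) {i : ℕ}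
    (h1 : 1 ≤ i) (h2 : i < L.length) :
    L.getD i 0 = (g - (stepPairs g L i).card) * L.getD (i-1) 0 +
      (((stepPairs g L i).filter (fun p => p.2 ≠ 0)).map (fun p => L.getD (p.2 - 1) 0)).sum := by
  have hce : chainExists g L i := hch.2.2 i h1 h2
  obtain ⟨hk2, hkg, hjle, hsum⟩ := rule_spec hce
  set k := (rule g L i).1
  set j := (rule g L i).2
  set nt := Finset.univ.filter (fun t => j t < i - 1) with hnt
  have hntk : nt.card ≤ k := by
    calc nt.card ≤ (Finset.univ : Finset (Fin k)).card := Finset.card_filter_le _ _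
      _ = k := by simp
  have hcard : (stepPairs g L i).card = (g - k) + nt.card := card_stepPairs
  have hgq : g - (stepPairs g L i).card = k - nt.card := by omega
  have hfilter : (stepPairs g L i).filter (fun p => p.2 ≠ 0)
      = nt.val.map (fun t => (i, j t + 1)) := by
    unfold stepPairs
    rw [Multiset.filter_add]
    have h0 : (Multiset.replicate (g - k) ((i, 0) : ℕ × ℕ)).filter (fun p => p.2 ≠ 0) = 0 := by
      rw [Multiset.filter_eq_nil]
      intro a ha
      rw [Multiset.eq_of_mem_replicate ha]
      simp
    have h1' : (nt.val.map (fun t => (i, j t + 1))).filter (fun p => p.2 ≠ 0)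
        = nt.val.map (fun t => (i, j t + 1)) := by
      rw [Multiset.filter_eq_self]
      intro a ha
      rw [Multiset.mem_map] at ha
      obtain ⟨t, _, rfl⟩ := ha
      simp
    rw [h0, h1', zero_add]
  rw [hgq, hfilter, Multiset.map_map]
  exact step_decomp hch h1 h2

end GChainAux

namespace GChainAux

lemma step_ineq {g : ℕ} {L : List ℕ} (hch : IsGAddChainList g L)
    (hs : L.Pairwise (· < ·)) {i : ℕ} (h2i : 2 ≤ i) (hlt : i < L.length) :
    (L.getD i 0 : ℝ) + (stepPairs g L i).card * ((L.getD (i-1) 0 : ℝ) - L.getD (i-2) 0)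
      ≤ g * L.getD (i-1) 0 := by
  have h1 : 1 ≤ i := by omega
  have hce : chainExists g L i := hch.2.2 i h1 hlt
  obtain ⟨hk2, hkg, hjle, hsum⟩ := rule_spec hce
  set k := (rule g L i).1
  set j := (rule g L i).2
  set nt := Finset.univ.filter (fun t => j t < i - 1) with hnt
  have hntk : nt.card ≤ k := by
    calc nt.card ≤ (Finset.univ : Finset (Fin k)).card := Finset.card_filter_le _ _
      _ = k := by simp
  have hi1lt : i - 1 < L.length := by omega
  have hi2lt : i - 2 < L.length := by omega
  -- each non-top term is at most getD (i-2)
  have hterm : ∀ t ∈ nt, L.getD (j t) 0 ≤ L.getD (i-2) 0 := by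
    intro t ht
    rw [hnt, Finset.mem_filter] at ht
    exact getD_le_getD hs (by omega) hi2lt
  have hntsum : ∑ t ∈ nt, L.getD (j t) 0 ≤ nt.card * L.getD (i-2) 0 := by
    calc ∑ t ∈ nt, L.getD (j t) 0 ≤ ∑ _t ∈ nt, L.getD (i-2) 0 := Finset.sum_le_sum hterm
      _ = nt.card * L.getD (i-2) 0 := by rw [Finset.sum_const, smul_eq_mul]
  have hdecomp := step_decomp hch h1 hlt
  have hcard : (stepPairs g L i).card = (g - k) + nt.card := card_stepPairs
  -- pass to the reals
  have hbc : (L.getD (i-2) 0 : ℝ) ≤ (L.getD (i-1) 0 : ℝ) := by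
    exact_mod_cast getD_le_getD hs (by omega) hi1lt
  have hb0 : (0:ℝ) ≤ (L.getD (i-2) 0 : ℝ) := by positivity
  have hkR : ((k - nt.card : ℕ) : ℝ) = (k:ℝ) - nt.card := by
    push_cast [Nat.cast_sub hntk]; ring
  have hgkR : ((g - k : ℕ) : ℝ) = (g:ℝ) - k := by
    push_cast [Nat.cast_sub hkg]; ring
  have haiR : (L.getD i 0 : ℝ) ≤ ((k:ℝ) - nt.card) * L.getD (i-1) 0 + nt.card * L.getD (i-2) 0 := by
    have : (L.getD i 0 : ℝ) = ((k - nt.card : ℕ) : ℝ) * L.getD (i-1) 0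
        + ((∑ t ∈ nt, L.getD (j t) 0 : ℕ) : ℝ) := by
      exact_mod_cast congrArg (fun x : ℕ => (x : ℝ)) hdecomp
    rw [this, hkR]
    have : ((∑ t ∈ nt, L.getD (j t) 0 : ℕ) : ℝ) ≤ (nt.card : ℝ) * L.getD (i-2) 0 := by
      exact_mod_cast hntsum
    linarith
  have hcardR : ((stepPairs g L i).card : ℝ) = ((g:ℝ) - k) + nt.card := by
    rw [hcard]; push_cast [Nat.cast_sub hkg]; ring
  rw [hcardR]
  have hgk0 : (0:ℝ) ≤ (g:ℝ) - k := by
    have : (k:ℝ) ≤ g := by exact_mod_cast hkg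
    linarith
  nlinarith [mul_nonneg hgk0 hb0]

lemma step_one {g : ℕ} {L : List ℕ} (hch : IsGAddChainList g L)
    (hlt : 1 < L.length) : L.getD 1 0 + (stepPairs g L 1).card = g := by
  have hce : chainExists g L 1 := hch.2.2 1 le_rfl hlt
  obtain ⟨hk2, hkg, hjle, hsum⟩ := rule_spec hce
  set k := (rule g L 1).1
  set j := (rule g L 1).2
  have hjz : ∀ t, j t = 0 := fun t => Nat.le_zero.mp (by simpa using hjle t)
  have hval : L.getD 1 0 = k := by
    rw [hsum]
    have : ∀ t : Fin k, L.getD (j t) 0 = 1 := by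
      intro t; rw [hjz t]; exact hch.2.1
    rw [Finset.sum_congr rfl (fun t _ => this t), Finset.sum_const]
    simp
  have hempty : (Finset.univ.filter (fun t => j t < 1 - 1)).card = 0 := by
    rw [Finset.card_eq_zero, Finset.filter_eq_empty_iff]
    intro t _
    simp
  have hcard : (stepPairs g L 1).card = (g - k) + 0 := by
    rw [card_stepPairs, hempty]
  rw [hval, hcard]
  omega

lemma card_chainCode {g : ℕ} {L : List ℕ} :
    (chainCode g L).card = ∑ i ∈ Finset.Icc 1 (L.length - 1), (stepPairs g L i).card := by
  unfold chainCode
  induction (Finset.Icc 1 (L.length - 1)) using Finset.cons_induction with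
  | empty => simp
  | cons a s ha ih => simp [Finset.sum_cons, ih]

lemma filter_sum_multiset {α : Type*} [DecidableEq α] (s : Finset ℕ) (f : ℕ → Multiset α)
    (p : α → Prop) [DecidablePred p] :
    Multiset.filter p (∑ i ∈ s, f i) = ∑ i ∈ s, Multiset.filter p (f i) := by
  induction s using Finset.cons_induction with
  | empty => simp
  | cons a s ha ih => rw [Finset.sum_cons, Finset.sum_cons, Multiset.filter_add, ih]

lemma code_filter {g : ℕ} {L : List ℕ} {i : ℕ} (hi1 : 1 ≤ i) (hi2 : i ≤ L.length - 1) :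
    (chainCode g L).filter (fun p => p.1 = i) = stepPairs g L i := by
  unfold chainCode
  rw [filter_sum_multiset]
  rw [Finset.sum_eq_single i]
  · rw [Multiset.filter_eq_self]
    intro a ha
    exact (mem_stepPairs ha).1
  · intro b _ hbi
    rw [Multiset.filter_eq_nil]
    intro a ha
    rw [(mem_stepPairs ha).1]
    exact hbi
  · intro h
    exact absurd (Finset.mem_Icc.mpr ⟨hi1, hi2⟩) h

lemma mem_chainCode {g : ℕ} {L : List ℕ} {p : ℕ × ℕ} (hp : p ∈ chainCode g L) :
    1 ≤ p.1 ∧ p.1 ≤ L.length - 1 ∧ p.2 ≤ p.1 - 1 := by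
  unfold chainCode at hp
  rw [Multiset.mem_sum] at hp
  obtain ⟨i, hi, hpi⟩ := hp
  rw [Finset.mem_Icc] at hi
  obtain ⟨h1, h2⟩ := mem_stepPairs hpi
  exact ⟨h1 ▸ hi.1, h1 ▸ hi.2, h1 ▸ h2⟩

end GChainAux

namespace GChainAux

lemma one_le_log {g : ℕ} (hg : 3 ≤ g) : 1 ≤ Real.log g := by
  have h3 : (3:ℝ) ≤ g := by exact_mod_cast hg
  have he : Real.exp 1 ≤ 3 := by
    have := Real.exp_one_lt_d9
    linarith
  have h1 : 1 ≤ Real.log 3 := (Real.le_log_iff_exp_le (by norm_num)).mpr he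
  calc (1:ℝ) ≤ Real.log 3 := h1
    _ ≤ Real.log g := Real.log_le_log (by norm_num) h3

lemma exp_interp {G u : ℝ} (hG : 1 ≤ G) (h0 : 0 ≤ u) (h1 : u ≤ 1) :
    Real.exp (u * Real.log G) ≤ 1 + u * (G - 1) := by
  have h := convexOn_exp.2 (Set.mem_univ (0:ℝ)) (Set.mem_univ (Real.log G))
    (by linarith : (0:ℝ) ≤ 1 - u) h0 (by ring)
  simp only [smul_eq_mul, mul_zero, zero_add, Real.exp_zero,
    Real.exp_log (by linarith : (0:ℝ) < G)] at h
  calc Real.exp (u * Real.log G) ≤ (1-u) * 1 + u * G := h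
    _ = 1 + u * (G-1) := by ring

lemma lemA {G q d d' x : ℝ} (hG : 3 ≤ G) (hlng : 1 ≤ Real.log G) (hq0 : 0 ≤ q) (hqG : q ≤ G)
    (hd : 0 ≤ d) (hd' : 0 ≤ d') (hx1 : x ≤ 1) (hF2 : 2*x ≤ 1 + 2*d')
    (hmain : q*(1-x) ≤ G*(Real.log G)*d) : q ≤ 2*G*Real.log G*d + 2*G*d' := by
  set lg := Real.log G with hlg
  have hG0 : (0:ℝ) < G := by linarith
  by_cases hc : 1 - x ≤ lg * d
  · have e1 : G*(1-x) ≤ G*(lg*d) := mul_le_mul_of_nonneg_left hc hG0.le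
    have e2 : G*(2*x-1) ≤ G*(2*d') := mul_le_mul_of_nonneg_left (by linarith) hG0.le
    nlinarith [e1, e2]
  · push_neg at hc
    have hlgd0 : 0 ≤ lg * d := mul_nonneg (by linarith) hd
    have hx : 0 < 1 - x := by linarith
    have key : G*lg*d ≤ (2*G*lg*d + 2*G*d')*(1-x) := by
      rcases le_or_gt x (1/2) with h | h
      · have p1 : 0 ≤ G*(lg*d)*(1-2*x) :=
          mul_nonneg (mul_nonneg hG0.le hlgd0) (by linarith)
        have p2 : 0 ≤ 2*G*d'*(1-x) := by
          have := mul_nonneg (mul_nonneg (by linarith : (0:ℝ) ≤ 2*G) hd') hx.le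
          linarith
        nlinarith [p1, p2]
      · have h2x : (0:ℝ) ≤ 2*x - 1 := by linarith
        have ha : G*(lg*d*(2*x-1)) ≤ G*((1-x)*(2*x-1)) :=
          mul_le_mul_of_nonneg_left (mul_le_mul_of_nonneg_right hc.le h2x) hG0.le
        have hb : G*((1-x)*(2*x-1)) ≤ G*((1-x)*(2*d')) :=
          mul_le_mul_of_nonneg_left
            (mul_le_mul_of_nonneg_left (by linarith : 2*x-1 ≤ 2*d') hx.le) hG0.le
        nlinarith [ha, hb]
    have hfin : q*(1-x) ≤ (2*G*lg*d + 2*G*d')*(1-x) := le_trans hmain key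
    exact le_of_mul_le_mul_right hfin hx

/-- Per-step deficiency. -/
noncomputable def dd (g : ℕ) (L : List ℕ) (i : ℕ) : ℝ :=
  1 - (Real.log (L.getD i 0) - Real.log (L.getD (i-1) 0)) / Real.log g

lemma dd_nonneg {g : ℕ} {L : List ℕ} (hg : 3 ≤ g) (hch : IsGAddChainList g L)
    (hs : L.Pairwise (· < ·)) {i : ℕ} (h1 : 1 ≤ i) (hlt : i < L.length) :
    0 ≤ dd g L i := by
  have hlg : (0:ℝ) < Real.log g := lt_of_lt_of_le one_pos (one_le_log hg)
  have hi1 : i - 1 < L.length := by omega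
  have hc0 : (0:ℝ) < (L.getD (i-1) 0 : ℝ) := by
    exact_mod_cast one_le_getD hch hs hi1
  have he0 : (0:ℝ) < (L.getD i 0 : ℝ) := by
    exact_mod_cast one_le_getD hch hs hlt
  have hG0 : (0:ℝ) < (g:ℝ) := by
    have : (3:ℝ) ≤ g := by exact_mod_cast hg
    linarith
  have hstep : (L.getD i 0 : ℝ) ≤ (g:ℝ) * L.getD (i-1) 0 := by
    exact_mod_cast getD_le_mul hch hs h1 hlt
  have hlogstep : Real.log (L.getD i 0) ≤ Real.log g + Real.log (L.getD (i-1) 0) := by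
    calc Real.log (L.getD i 0) ≤ Real.log ((g:ℝ) * L.getD (i-1) 0) :=
          Real.log_le_log he0 hstep
      _ = Real.log g + Real.log (L.getD (i-1) 0) :=
          Real.log_mul (ne_of_gt hG0) (ne_of_gt hc0)
  have : (Real.log (L.getD i 0) - Real.log (L.getD (i-1) 0)) / Real.log g ≤ 1 :=
    (div_le_one hlg).mpr (by linarith)
  unfold dd
  linarith

lemma dd_le_one {g : ℕ} {L : List ℕ} (hg : 3 ≤ g) (hch : IsGAddChainList g L)
    (hs : L.Pairwise (· < ·)) {i : ℕ} (hlt : i < L.length) :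
    dd g L i ≤ 1 := by
  have hlg : (0:ℝ) < Real.log g := lt_of_lt_of_le one_pos (one_le_log hg)
  have hi1 : i - 1 < L.length := by omega
  have hc0 : (0:ℝ) < (L.getD (i-1) 0 : ℝ) := by
    exact_mod_cast one_le_getD hch hs hi1
  have hmono : (L.getD (i-1) 0 : ℝ) ≤ (L.getD i 0 : ℝ) := by
    exact_mod_cast getD_le_getD hs (Nat.sub_le _ _) hlt
  have hnum : 0 ≤ Real.log (L.getD i 0) - Real.log (L.getD (i-1) 0) := by
    have := Real.log_le_log hc0 hmono
    linarith
  have : 0 ≤ (Real.log (L.getD i 0) - Real.log (L.getD (i-1) 0)) / Real.log g :=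
    div_nonneg hnum hlg.le
  unfold dd
  linarith

lemma step_card_bound {g : ℕ} {L : List ℕ} (hg : 3 ≤ g) (hch : IsGAddChainList g L)
    (hs : L.Pairwise (· < ·)) {i : ℕ} (h1 : 1 ≤ i) (hlt : i < L.length) :
    ((stepPairs g L i).card : ℝ) ≤ 2*(g:ℝ)*Real.log g*(dd g L i)
      + 2*(g:ℝ)*(if i = 1 then 0 else dd g L (i-1)) := by
  have hG3 : (3:ℝ) ≤ (g:ℝ) := by exact_mod_cast hg
  have hG0 : (0:ℝ) < (g:ℝ) := by linarith
  have hlng : 1 ≤ Real.log g := one_le_log hg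
  have hlg : (0:ℝ) < Real.log g := lt_of_lt_of_le one_pos hlng
  set lg := Real.log (g:ℝ) with hlgdef
  rcases eq_or_lt_of_le h1 with heq | hgt
  · -- i = 1
    subst heq
    rw [if_pos rfl]
    have ha1pos : (0:ℝ) < (L.getD 1 0 : ℝ) := by
      exact_mod_cast one_le_getD hch hs hlt
    have hq : L.getD 1 0 + (stepPairs g L 1).card = g := step_one hch hlt
    have ha1g : (L.getD 1 0 : ℝ) ≤ (g:ℝ) := by
      have h := getD_le_mul hch hs le_rfl hlt
      have h0 : L.getD (1-1) 0 = 1 := hch.2.1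
      rw [h0, mul_one] at h
      exact_mod_cast h
    have hqR : ((stepPairs g L 1).card : ℝ) = (g:ℝ) - L.getD 1 0 := by
      have : ((L.getD 1 0 + (stepPairs g L 1).card : ℕ) : ℝ) = (g:ℝ) := by
        exact_mod_cast congrArg (fun x : ℕ => (x:ℝ)) hq
      push_cast at this
      linarith
    have hlog1 : (g:ℝ) * (Real.log (L.getD 1 0) - lg) ≤ (L.getD 1 0 : ℝ) - g := by
      have h0 : Real.log ((L.getD 1 0 : ℝ)/(g:ℝ)) ≤ (L.getD 1 0 : ℝ)/(g:ℝ) - 1 :=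
        Real.log_le_sub_one_of_pos (by positivity)
      rw [Real.log_div (ne_of_gt ha1pos) (ne_of_gt hG0)] at h0
      calc (g:ℝ) * (Real.log (L.getD 1 0) - lg)
          ≤ (g:ℝ) * ((L.getD 1 0 : ℝ)/(g:ℝ) - 1) := mul_le_mul_of_nonneg_left h0 hG0.le
        _ = (L.getD 1 0 : ℝ) - g := by field_simp
    have hloga1 : Real.log (L.getD 1 0) ≤ lg := Real.log_le_log ha1pos ha1g
    have hdd1 : dd g L 1 = 1 - Real.log (L.getD 1 0) / lg := by
      unfold dd
      have h0 : L.getD (1-1) 0 = 1 := hch.2.1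
      rw [h0]
      simp
      rfl
    have h2 : 2*(g:ℝ)*lg*(dd g L 1) = 2*(g:ℝ)*(lg - Real.log (L.getD 1 0)) := by
      rw [hdd1]
      field_simp
    rw [hqR, h2, mul_zero, add_zero]
    nlinarith [hlog1, hloga1, hG0]
  · -- 2 ≤ i
    have h2i : 2 ≤ i := hgt
    rw [if_neg (by omega)]
    have hi1lt : i - 1 < L.length := by omega
    have hi2lt : i - 2 < L.length := by omega
    have hi11 : i - 1 - 1 = i - 2 := by omega
    have hb0 : (0:ℝ) < (L.getD (i-2) 0 : ℝ) := by
      exact_mod_cast one_le_getD hch hs hi2lt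
    have hc0 : (0:ℝ) < (L.getD (i-1) 0 : ℝ) := by
      exact_mod_cast one_le_getD hch hs hi1lt
    have he0 : (0:ℝ) < (L.getD i 0 : ℝ) := by
      exact_mod_cast one_le_getD hch hs hlt
    have hbc : (L.getD (i-2) 0 : ℝ) ≤ (L.getD (i-1) 0 : ℝ) := by
      exact_mod_cast getD_le_getD hs (by omega) hi1lt
    have hd : 0 ≤ dd g L i := dd_nonneg hg hch hs h1 hlt
    have hd' : 0 ≤ dd g L (i-1) := dd_nonneg hg hch hs (by omega) hi1lt
    have hd'1 : dd g L (i-1) ≤ 1 := dd_le_one hg hch hs hi1lt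
    have hq0 : (0:ℝ) ≤ ((stepPairs g L i).card : ℝ) := by positivity
    have hqG : ((stepPairs g L i).card : ℝ) ≤ (g:ℝ) := by
      exact_mod_cast card_stepPairs_le (hch.2.2 i h1 hlt)
    have hx1 : (L.getD (i-2) 0 : ℝ) / (L.getD (i-1) 0 : ℝ) ≤ 1 :=
      (div_le_one hc0).mpr hbc
    have hdd' : dd g L (i-1) * lg
        = lg - (Real.log (L.getD (i-1) 0) - Real.log (L.getD (i-2) 0)) := by
      unfold dd
      rw [hi11, ← hlgdef, sub_mul, div_mul_cancel₀ _ hlg.ne', one_mul]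
    have hx_eq : (L.getD (i-2) 0 : ℝ) / (L.getD (i-1) 0 : ℝ)
        = Real.exp ((dd g L (i-1)) * lg) / (g:ℝ) := by
      rw [hdd',
        show lg - (Real.log (L.getD (i-1) 0) - Real.log (L.getD (i-2) 0))
          = lg + Real.log (L.getD (i-2) 0) - Real.log (L.getD (i-1) 0) by ring,
        Real.exp_sub, Real.exp_add, Real.exp_log hG0, Real.exp_log hb0,
        Real.exp_log hc0]
      rw [eq_div_iff (ne_of_gt hG0)]
      field_simp [ne_of_gt hc0]
    have hinterp : Real.exp ((dd g L (i-1)) * lg) ≤ 1 + (dd g L (i-1)) * ((g:ℝ) - 1) :=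
      exp_interp (by linarith) hd' hd'1
    have hF2 : 2*((L.getD (i-2) 0 : ℝ) / (L.getD (i-1) 0 : ℝ)) ≤ 1 + 2*(dd g L (i-1)) := by
      rw [hx_eq, ← mul_div_assoc, div_le_iff₀ hG0]
      nlinarith [hinterp, hd', hG3]
    have hstepR := step_ineq hch hs h2i hlt
    have hexp : (g:ℝ) * (L.getD (i-1) 0 : ℝ) * Real.exp (-(dd g L i * lg))
        = (L.getD i 0 : ℝ) := by
      have h1' : -(dd g L i * lg)
          = Real.log (L.getD i 0) - (Real.log (L.getD (i-1) 0) + lg) := by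
        unfold dd
        rw [← hlgdef, sub_mul, div_mul_cancel₀ _ hlg.ne', one_mul]
        ring
      rw [h1', Real.exp_sub, Real.exp_add, Real.exp_log he0, Real.exp_log hc0,
        Real.exp_log hG0]
      have hne : (L.getD (i-1) 0 : ℝ) * (g:ℝ) ≠ 0 := by positivity
      rw [← mul_div_assoc, div_eq_iff hne]
      ring
    have hge : (g:ℝ) * (L.getD (i-1) 0 : ℝ) - (g:ℝ)*lg*(dd g L i)*(L.getD (i-1) 0 : ℝ)
        ≤ (L.getD i 0 : ℝ) := by
      have hexp1 := Real.add_one_le_exp (-(dd g L i * lg))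
      calc (g:ℝ) * (L.getD (i-1) 0 : ℝ) - (g:ℝ)*lg*(dd g L i)*(L.getD (i-1) 0 : ℝ)
          = (g:ℝ) * (L.getD (i-1) 0 : ℝ) * (1 - dd g L i*lg) := by ring
        _ ≤ (g:ℝ) * (L.getD (i-1) 0 : ℝ) * Real.exp (-(dd g L i*lg)) := by
            apply mul_le_mul_of_nonneg_left _ (by positivity)
            linarith
        _ = (L.getD i 0 : ℝ) := hexp
    have h2' : ((stepPairs g L i).card : ℝ)*((L.getD (i-1) 0 : ℝ) - (L.getD (i-2) 0 : ℝ))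
        ≤ (g:ℝ)*lg*(dd g L i)*(L.getD (i-1) 0 : ℝ) := by linarith [hstepR, hge]
    have hmain : ((stepPairs g L i).card : ℝ)
        * (1 - (L.getD (i-2) 0 : ℝ) / (L.getD (i-1) 0 : ℝ)) ≤ (g:ℝ)*lg*(dd g L i) := by
      rw [show 1 - (L.getD (i-2) 0 : ℝ) / (L.getD (i-1) 0 : ℝ)
          = ((L.getD (i-1) 0 : ℝ) - (L.getD (i-2) 0 : ℝ)) / (L.getD (i-1) 0 : ℝ) by
            rw [sub_div, div_self (ne_of_gt hc0)],
        ← mul_div_assoc, div_le_iff₀ hc0]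
      exact h2'
    exact lemA hG3 hlng hq0 hqG hd hd' hx1 hF2 hmain

end GChainAux

namespace GChainAux

lemma sum_Icc_shift (r : ℕ) (f : ℕ → ℝ) :
    ∑ i ∈ Finset.Icc 1 r, f i = ∑ t ∈ Finset.range r, f (t+1) := by
  rw [← Finset.Ico_add_one_right_eq_Icc, Finset.sum_Ico_eq_sum_range]
  simp [add_comm]

lemma getLastD_eq_getD {L : List ℕ} : L.getLastD 0 = L.getD (L.length - 1) 0 := by
  rw [List.getLastD_eq_getLast?, List.getLast?_eq_getElem?, List.getD_eq_getElem?_getD]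

lemma chainCode_card_le {g : ℕ} {L : List ℕ} (hg : 3 ≤ g) (hch : IsGAddChainList g L)
    (hs : L.Pairwise (· < ·)) {m : ℕ} (hm : g ^ m ≤ L.getD (L.length - 1) 0) :
    ((chainCode g L).card : ℝ)
      ≤ 4*(g:ℝ)*Real.log g*(((L.length - 1 : ℕ) : ℝ) - (m:ℝ)) := by
  have hG3 : (3:ℝ) ≤ (g:ℝ) := by exact_mod_cast hg
  have hG0 : (0:ℝ) < (g:ℝ) := by linarith
  have hlng : 1 ≤ Real.log g := one_le_log hg
  have hlg : (0:ℝ) < Real.log g := lt_of_lt_of_le one_pos hlng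
  set lg := Real.log (g:ℝ) with hlgdef
  have hne : L ≠ [] := hch.1
  have hlen : 0 < L.length := List.length_pos_iff.mpr hne
  set r := L.length - 1 with hr
  have hlenr : L.length = r + 1 := by omega
  -- the sum of deficiencies telescopes
  have htel : ∑ t ∈ Finset.range r, (Real.log (L.getD (t+1) 0) - Real.log (L.getD t 0))
      = Real.log (L.getD r 0) - Real.log (L.getD 0 0) :=
    Finset.sum_range_sub (fun t => Real.log (L.getD t 0)) r
  have hlog0 : Real.log (L.getD 0 0) = 0 := by rw [hch.2.1]; simp
  have hlogr : (m:ℝ) * lg ≤ Real.log (L.getD r 0) := by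
    have h1 : ((g:ℕ)^m : ℝ) ≤ (L.getD r 0 : ℝ) := by exact_mod_cast hm
    have h2 : Real.log ((g:ℝ)^m) ≤ Real.log (L.getD r 0) := by
      apply Real.log_le_log (by positivity)
      exact_mod_cast h1
    rwa [Real.log_pow] at h2
  have hsumd : ∑ i ∈ Finset.Icc 1 r, dd g L i ≤ ((r:ℕ) : ℝ) - m := by
    rw [sum_Icc_shift]
    have hshape : ∀ t ∈ Finset.range r, dd g L (t+1)
        = 1 - (Real.log (L.getD (t+1) 0) - Real.log (L.getD t 0)) / lg := by
      intro t _
      unfold dd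
      norm_num
      rfl
    rw [Finset.sum_congr rfl hshape]
    rw [Finset.sum_sub_distrib, Finset.sum_const, Finset.card_range, ← Finset.sum_div,
      htel, hlog0, sub_zero]
    have : (m:ℝ) ≤ Real.log (L.getD r 0) / lg := (le_div_iff₀ hlg).mpr hlogr
    simp only [nsmul_eq_mul, mul_one]
    linarith
  have hd0 : ∀ i ∈ Finset.Icc 1 r, 0 ≤ dd g L i := by
    intro i hi
    rw [Finset.mem_Icc] at hi
    exact dd_nonneg hg hch hs hi.1 (by omega)
  have hD0 : 0 ≤ ∑ i ∈ Finset.Icc 1 r, dd g L i := Finset.sum_nonneg hd0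
  -- per-step bounds
  have hstep : ∀ i ∈ Finset.Icc 1 r, ((stepPairs g L i).card : ℝ)
      ≤ 2*(g:ℝ)*lg*(dd g L i) + 2*(g:ℝ)*(if i = 1 then 0 else dd g L (i-1)) := by
    intro i hi
    rw [Finset.mem_Icc] at hi
    exact step_card_bound hg hch hs hi.1 (by omega)
  have hcardsum : ((chainCode g L).card : ℝ)
      = ∑ i ∈ Finset.Icc 1 r, ((stepPairs g L i).card : ℝ) := by
    rw [card_chainCode]
    push_cast
    rfl
  -- bound the shifted sum
  have hite : ∑ i ∈ Finset.Icc 1 r, (if i = 1 then (0:ℝ) else dd g L (i-1))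
      ≤ ∑ i ∈ Finset.Icc 1 r, dd g L i := by
    rcases Nat.eq_zero_or_pos r with hr0 | hr1
    · simp [hr0]
    rw [sum_Icc_shift]
    have hsh : ∀ t ∈ Finset.range r, (if t+1 = 1 then (0:ℝ) else dd g L (t+1-1))
        = (if t = 0 then (0:ℝ) else dd g L t) := by
      intro t _
      by_cases h : t = 0
      · simp [h]
      · rw [if_neg (by omega), if_neg h]
        norm_num
    rw [Finset.sum_congr rfl hsh]
    rw [Finset.range_eq_Ico, ← Finset.sum_Ico_consecutive _ (Nat.zero_le 1) hr1]
    have h1 : Finset.Ico 0 1 = {0} := rfl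
    rw [h1, Finset.sum_singleton, if_pos rfl, zero_add]
    have heq : ∑ t ∈ Finset.Ico 1 r, (if t = 0 then (0:ℝ) else dd g L t)
        = ∑ t ∈ Finset.Ico 1 r, dd g L t := by
      apply Finset.sum_congr rfl
      intro t ht
      rw [Finset.mem_Ico] at ht
      rw [if_neg (by omega)]
    rw [heq]
    apply Finset.sum_le_sum_of_subset_of_nonneg
    · intro t ht
      rw [Finset.mem_Ico] at ht
      rw [Finset.mem_Icc]
      omega
    · intro i hi _
      rw [Finset.mem_Icc] at hi
      exact dd_nonneg hg hch hs hi.1 (by omega)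
  set D := ∑ i ∈ Finset.Icc 1 r, dd g L i with hD
  calc ((chainCode g L).card : ℝ)
      = ∑ i ∈ Finset.Icc 1 r, ((stepPairs g L i).card : ℝ) := hcardsum
    _ ≤ ∑ i ∈ Finset.Icc 1 r,
          (2*(g:ℝ)*lg*(dd g L i) + 2*(g:ℝ)*(if i = 1 then 0 else dd g L (i-1))) :=
        Finset.sum_le_sum hstep
    _ = 2*(g:ℝ)*lg*D + 2*(g:ℝ)*(∑ i ∈ Finset.Icc 1 r, (if i = 1 then (0:ℝ) else dd g L (i-1))) := by
        rw [Finset.sum_add_distrib, ← Finset.mul_sum, ← Finset.mul_sum]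
    _ ≤ 2*(g:ℝ)*lg*D + 2*(g:ℝ)*D := by
        have := mul_le_mul_of_nonneg_left hite (by linarith : (0:ℝ) ≤ 2*(g:ℝ))
        linarith
    _ ≤ 4*(g:ℝ)*lg*D := by
        have hkey : 0 ≤ (g:ℝ)*D*(lg - 1) :=
          mul_nonneg (mul_nonneg hG0.le hD0) (by linarith)
        nlinarith [hkey]
    _ ≤ 4*(g:ℝ)*lg*(((r:ℕ) : ℝ) - m) := by
        apply mul_le_mul_of_nonneg_left hsumd
        positivity

end GChainAux

namespace GChainAux

lemma chain_eq_of_code_eq {g : ℕ} {L₁ L₂ : List ℕ} (hch₁ : IsGAddChainList g L₁)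
    (hch₂ : IsGAddChainList g L₂) (hlen : L₁.length = L₂.length)
    (hcode : chainCode g L₁ = chainCode g L₂) : L₁ = L₂ := by
  have hlen1 : 0 < L₁.length := List.length_pos_iff.mpr hch₁.1
  set r := L₁.length - 1 with hr
  have hr2 : L₂.length - 1 = r := by omega
  have hsp : ∀ i, 1 ≤ i → i ≤ r → stepPairs g L₁ i = stepPairs g L₂ i := by
    intro i h1 h2
    rw [← code_filter (L := L₁) h1 (by omega), ← code_filter (L := L₂) h1 (by omega), hcode]
  have hval : ∀ i, i ≤ r → L₁.getD i 0 = L₂.getD i 0 := by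
    intro i
    induction i using Nat.strong_induction_on with
    | _ i IH =>
      intro hir
      rcases Nat.eq_zero_or_pos i with rfl | h1
      · rw [hch₁.2.1, hch₂.2.1]
      · have hlt₁ : i < L₁.length := by omega
        have hlt₂ : i < L₂.length := by omega
        have hv₁ := code_value hch₁ h1 hlt₁
        have hv₂ := code_value hch₂ h1 hlt₂
        rw [hv₁, hv₂, hsp i h1 hir, IH (i-1) (by omega) (by omega)]
        congr 1
        apply congrArg Multiset.sum
        apply Multiset.map_congr rfl
        intro p hp
        have hp2 := (mem_stepPairs (Multiset.mem_of_mem_filter hp)).2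
        exact IH (p.2 - 1) (by omega) (by omega)
  apply List.ext_getElem hlen
  intro i h1 h2
  rw [← List.getD_eq_getElem L₁ 0 h1, ← List.getD_eq_getElem L₂ 0 h2]
  exact hval i (by omega)

end GChainAux

namespace GChainAux

noncomputable def padCode (g T₀ N : ℕ) (L : List ℕ) : ℕ × Sym (Fin (N+1) × Fin (N+1)) T₀ :=
  (L.length - 1,
    if h : (chainCode g L).card ≤ T₀ then
      ⟨(chainCode g L).map
          (fun p => ((⟨min p.1 N, by omega⟩ : Fin (N+1)), (⟨min p.2 N, by omega⟩ : Fin (N+1)))) +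
        Multiset.replicate (T₀ - (chainCode g L).card)
          ((⟨N, by omega⟩ : Fin (N+1)), (⟨N, by omega⟩ : Fin (N+1))), by
        rw [Multiset.card_add, Multiset.card_map, Multiset.card_replicate]; omega⟩
    else Sym.replicate T₀ ((⟨N, by omega⟩ : Fin (N+1)), (⟨N, by omega⟩ : Fin (N+1))))

lemma padCode_inj {g T₀ N : ℕ} {L₁ L₂ : List ℕ}
    (hch₁ : IsGAddChainList g L₁) (hch₂ : IsGAddChainList g L₂)
    (hc₁ : (chainCode g L₁).card ≤ T₀) (hc₂ : (chainCode g L₂).card ≤ T₀)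
    (hb₁ : ∀ p ∈ chainCode g L₁, p.1 < N ∧ p.2 < N)
    (hb₂ : ∀ p ∈ chainCode g L₂, p.1 < N ∧ p.2 < N)
    (heq : padCode g T₀ N L₁ = padCode g T₀ N L₂) : L₁ = L₂ := by
  classical
  set em : ℕ × ℕ → Fin (N+1) × Fin (N+1) :=
    fun p => ((⟨min p.1 N, by omega⟩ : Fin (N+1)), (⟨min p.2 N, by omega⟩ : Fin (N+1)))
    with hem
  set dummy : Fin (N+1) × Fin (N+1) := ((⟨N, by omega⟩ : Fin (N+1)), (⟨N, by omega⟩ : Fin (N+1)))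
    with hdummy
  unfold padCode at heq
  rw [Prod.ext_iff] at heq
  obtain ⟨h1, h2⟩ := heq
  simp only at h1
  simp only [dif_pos hc₁, dif_pos hc₂] at h2
  have hv : (chainCode g L₁).map em
        + Multiset.replicate (T₀ - (chainCode g L₁).card) dummy
      = (chainCode g L₂).map em
        + Multiset.replicate (T₀ - (chainCode g L₂).card) dummy := by
    exact congrArg Subtype.val ((dif_pos hc₁).symm.trans (h2.trans (dif_pos hc₂)))
  have strip : ∀ (L : List ℕ) (k : ℕ), (∀ p ∈ chainCode g L, p.1 < N ∧ p.2 < N) →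
      ((chainCode g L).map em + Multiset.replicate k dummy).filter (fun q => q ≠ dummy)
        = (chainCode g L).map em := by
    intro L k hb
    rw [Multiset.filter_add]
    have hrep : (Multiset.replicate k dummy).filter (fun q => q ≠ dummy) = 0 := by
      rw [Multiset.filter_eq_nil]
      intro a ha
      rw [Multiset.eq_of_mem_replicate ha]
      simp
    have hmap : ((chainCode g L).map em).filter (fun q => q ≠ dummy)
        = (chainCode g L).map em := by
      rw [Multiset.filter_eq_self]
      intro a ha
      rw [Multiset.mem_map] at ha
      obtain ⟨p, hp, rfl⟩ := ha
      obtain ⟨hp1, hp2⟩ := hb p hp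
      intro hcon
      have := congrArg (fun q : Fin (N+1) × Fin (N+1) => q.1.val) hcon
      simp [hem, hdummy] at this
      omega
    rw [hrep, hmap, add_zero]
  have hmeq : (chainCode g L₁).map em = (chainCode g L₂).map em := by
    rw [← strip L₁ _ hb₁, ← strip L₂ _ hb₂, hv]
  have hrec : ∀ (L : List ℕ), (∀ p ∈ chainCode g L, p.1 < N ∧ p.2 < N) →
      ((chainCode g L).map em).map (fun q : Fin (N+1) × Fin (N+1) => ((q.1 : ℕ), (q.2 : ℕ)))
        = chainCode g L := by
    intro L hb
    rw [Multiset.map_map]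
    have : ∀ p ∈ chainCode g L,
        ((fun q : Fin (N+1) × Fin (N+1) => ((q.1 : ℕ), (q.2 : ℕ))) ∘ em) p = id p := by
      intro p hp
      obtain ⟨hp1, hp2⟩ := hb p hp
      obtain ⟨p1, p2⟩ := p
      simp only [hem, Function.comp, id_eq, Prod.mk.injEq] at hp1 hp2 ⊢
      omega
    rw [Multiset.map_congr rfl this, Multiset.map_id]
  have hcode : chainCode g L₁ = chainCode g L₂ := by
    rw [← hrec L₁ hb₁, ← hrec L₂ hb₂, hmeq]
  have hlen : L₁.length = L₂.length := by
    have e₁ : 0 < L₁.length := List.length_pos_iff.mpr hch₁.1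
    have e₂ : 0 < L₂.length := List.length_pos_iff.mpr hch₂.1
    omega
  exact chain_eq_of_code_eq hch₁ hch₂ hlen hcode

end GChainAux

namespace GChainAux

open Filter in
lemma ev_cond (g : ℕ) (hg : 3 ≤ g) (ε' : ℝ) (hε'0 : 0 < ε') :
    ∀ᶠ m : ℕ in Filter.atTop,
      (8 ≤ ε' * (Nat.log g m : ℝ)) ∧ ((Nat.log g m : ℝ) + 2 ≤ (ε'/2) * m) ∧ g ≤ m := by
  have hg1 : 1 < g := by omega
  have hlng := one_le_log hg
  have h1 : ∀ᶠ m : ℕ in atTop, 8 ≤ ε' * (Nat.log g m : ℝ) := by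
    rw [Filter.eventually_atTop]
    refine ⟨g ^ (⌈(8:ℝ)/ε'⌉₊ + 1), fun m hm => ?_⟩
    have hgp : 0 < g ^ (⌈(8:ℝ)/ε'⌉₊ + 1) := pow_pos (by omega) _
    have hm0 : m ≠ 0 := by omega
    have hK : ⌈(8:ℝ)/ε'⌉₊ + 1 ≤ Nat.log g m := (Nat.le_log_iff_pow_le hg1 hm0).mpr hm
    have hKR : ((⌈(8:ℝ)/ε'⌉₊ : ℝ)) ≤ (Nat.log g m : ℝ) := by exact_mod_cast by omega
    have h8 : (8:ℝ)/ε' ≤ (Nat.log g m : ℝ) := le_trans (Nat.le_ceil _) hKR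
    rw [div_le_iff₀ hε'0] at h8
    linarith [mul_comm ε' ((Nat.log g m : ℝ))]
  have h2 : ∀ᶠ m : ℕ in atTop, (Nat.log g m : ℝ) + 2 ≤ (ε'/2) * m := by
    have hlit : ∀ᶠ x : ℝ in atTop, ‖Real.log x‖ ≤ ε'/4 * ‖x‖ :=
      Asymptotics.isLittleO_iff.mp Real.isLittleO_log_id_atTop (by linarith)
    have hx : ∀ᶠ x : ℝ in atTop, max 1 (16/ε') ≤ x := Filter.eventually_ge_atTop _
    have hnat := tendsto_natCast_atTop_atTop.eventually (hlit.and hx)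
    filter_upwards [hnat, Filter.eventually_ge_atTop 1] with m hm hm1
    obtain ⟨ha, hb⟩ := hm
    have hm1R : (1:ℝ) ≤ (m:ℝ) := le_trans (le_max_left _ _) hb
    have h16 : 16/ε' ≤ (m:ℝ) := le_trans (le_max_right _ _) hb
    have hlogm : Real.log m ≤ ε'/4 * m := by
      rw [Real.norm_eq_abs, Real.norm_eq_abs, abs_of_nonneg (Real.log_nonneg hm1R),
        abs_of_nonneg (by linarith)] at ha
      exact ha
    have h2m : (2:ℝ) ≤ ε'/4 * m := by
      rw [div_le_iff₀ hε'0] at h16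
      nlinarith
    have hLl : (Nat.log g m : ℝ) ≤ Real.log m := by
      have hm0 : m ≠ 0 := by omega
      have hp : ((g:ℝ))^(Nat.log g m) ≤ (m:ℝ) := by
        exact_mod_cast Nat.pow_log_le_self g hm0
      have hgt : (0:ℝ) < (g:ℝ)^(Nat.log g m) := by positivity
      have hlog := Real.log_le_log hgt hp
      rw [Real.log_pow] at hlog
      nlinarith [hlng, (Nat.cast_nonneg (Nat.log g m) : (0:ℝ) ≤ (Nat.log g m : ℝ))]
    linarith
  have h3 : ∀ᶠ m : ℕ in atTop, g ≤ m := Filter.eventually_ge_atTop g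
  exact h1.and (h2.and h3)

end GChainAux

namespace GChainAux

set_option maxHeartbeats 1000000 in
lemma count_bound (g : ℕ) (hg : 3 ≤ g) (ε ε' : ℝ) (hε'0 : 0 < ε') (hε'2 : ε' ≤ 1/2)
    (hε'ε : ε' ≤ ε) (m : ℕ)
    (h8 : 8 ≤ ε' * (Nat.log g m : ℝ))
    (hL2 : (Nat.log g m : ℝ) + 2 ≤ (ε'/2) * m)
    (hgm : g ≤ m) :
    (Set.ncard {L : List ℕ |
        IsGAddChainList g L ∧ L.Pairwise (· < ·) ∧
        Nat.log g (L.getLastD 0) = m ∧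
        ((L.length - 1 : ℕ) : ℝ) ≤
          (m : ℝ) + (1 - ε) * (m : ℝ) /
            (8 * (g : ℝ) * Real.log g * (Nat.log g m : ℝ))} : ℝ)
      ≤ (g:ℝ) ^ (((1:ℝ) - ε'/4) * (m:ℝ)) := by
  classical
  have hg1 : 1 < g := by omega
  have hG3 : (3:ℝ) ≤ (g:ℝ) := by exact_mod_cast hg
  have hG0 : (0:ℝ) < (g:ℝ) := by linarith
  have hlng : 1 ≤ Real.log g := one_le_log hg
  have hlg : (0:ℝ) < Real.log g := by linarith
  set Lm := Nat.log g m with hLmdef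
  have hLm1 : 1 ≤ Lm := by
    rw [hLmdef]
    exact (Nat.le_log_iff_pow_le hg1 (by omega)).mpr (by simpa using hgm)
  have hLmR : (1:ℝ) ≤ (Lm:ℝ) := by exact_mod_cast hLm1
  have hLm0R : (0:ℝ) < (Lm:ℝ) := by linarith
  have hmR12 : (12:ℝ) ≤ (m:ℝ) := by nlinarith [hL2, hLmR, hε'2, hε'0]
  have hm0 : m ≠ 0 := by
    intro h
    rw [h] at hmR12
    norm_num at hmR12
  have hmN12 : 12 ≤ m := by exact_mod_cast hmR12
  set T₀ := ⌊(1-ε')*(m:ℝ)/(2*(Lm:ℝ))⌋₊ with hT₀def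
  have hnum0 : (0:ℝ) ≤ (1-ε')*(m:ℝ) := by nlinarith [(Nat.cast_nonneg m : (0:ℝ) ≤ (m:ℝ))]
  have hT₀le : (T₀:ℝ) ≤ (1-ε')*(m:ℝ)/(2*(Lm:ℝ)) :=
    Nat.floor_le (div_nonneg hnum0 (by linarith))
  have hT₀m : T₀ ≤ m := by
    have h1 : (T₀:ℝ) ≤ (m:ℝ) := by
      calc (T₀:ℝ) ≤ (1-ε')*(m:ℝ)/(2*(Lm:ℝ)) := hT₀le
        _ ≤ (m:ℝ) := by
          rw [div_le_iff₀ (by linarith : (0:ℝ) < 2*(Lm:ℝ))]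
          nlinarith [(Nat.cast_nonneg m : (0:ℝ) ≤ (m:ℝ))]
    exact_mod_cast h1
  set S := {L : List ℕ |
      IsGAddChainList g L ∧ L.Pairwise (· < ·) ∧
      Nat.log g (L.getLastD 0) = m ∧
      ((L.length - 1 : ℕ) : ℝ) ≤
        (m : ℝ) + (1 - ε) * (m : ℝ) /
          (8 * (g : ℝ) * Real.log g * (Lm : ℝ))} with hSdef
  -- key per-chain bounds
  have hkey : ∀ L ∈ S, (L.length - 1 ≤ m + T₀) ∧ (chainCode g L).card ≤ T₀ := by
    intro L hL
    rw [hSdef, Set.mem_setOf_eq] at hL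
    obtain ⟨hch, hsort, hlogn, hlen⟩ := hL
    have hne : L ≠ [] := hch.1
    have hlpos : 0 < L.length := List.length_pos_iff.mpr hne
    have hnval : L.getLastD 0 = L.getD (L.length - 1) 0 := getLastD_eq_getD
    have hn1 : 1 ≤ L.getD (L.length - 1) 0 := one_le_getD hch hsort (by omega)
    have hgn : g^m ≤ L.getD (L.length - 1) 0 := by
      have h := Nat.pow_log_le_self g (x := L.getLastD 0) (by rw [hnval]; omega)
      rw [hlogn, hnval] at h
      exact h
    have hrm : m ≤ L.length - 1 := by
      have hub := getD_le_pow hch hsort (L.length - 1) (by omega)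
      exact (Nat.pow_le_pow_iff_right hg1).mp (le_trans hgn hub)
    have hrmR : (m:ℝ) ≤ ((L.length - 1 : ℕ):ℝ) := by exact_mod_cast hrm
    have hden : (0:ℝ) < 8*(g:ℝ)*Real.log g*(Lm:ℝ) := by
      have h1 : (0:ℝ) < 8*(g:ℝ)*Real.log g := by nlinarith
      exact mul_pos h1 hLm0R
    have hrm' : ((L.length - 1 : ℕ):ℝ) - m ≤ (1-ε')*m/(8*(g:ℝ)*Real.log g*(Lm:ℝ)) := by
      have hnumle : (1-ε)*(m:ℝ) ≤ (1-ε')*(m:ℝ) :=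
        mul_le_mul_of_nonneg_right (by linarith) (Nat.cast_nonneg m)
      have hmono : (1-ε)*(m:ℝ)/(8*(g:ℝ)*Real.log g*(Lm:ℝ))
          ≤ (1-ε')*(m:ℝ)/(8*(g:ℝ)*Real.log g*(Lm:ℝ)) :=
        (div_le_div_iff_of_pos_right hden).mpr hnumle
      linarith
    have hcard := chainCode_card_le hg hch hsort hgn
    have hc4 : (0:ℝ) ≤ 4*(g:ℝ)*Real.log g := by nlinarith
    have hmid : 4*(g:ℝ)*Real.log g*(((L.length-1:ℕ):ℝ) - m) ≤ (1-ε')*m/(2*(Lm:ℝ)) := by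
      calc 4*(g:ℝ)*Real.log g*(((L.length-1:ℕ):ℝ) - m)
          ≤ 4*(g:ℝ)*Real.log g*((1-ε')*m/(8*(g:ℝ)*Real.log g*(Lm:ℝ))) :=
            mul_le_mul_of_nonneg_left hrm' hc4
        _ = (1-ε')*m/(2*(Lm:ℝ)) := by
            field_simp
            ring
    constructor
    · have h1 : ((L.length - 1 - m : ℕ):ℝ) ≤ (1-ε')*m/(2*(Lm:ℝ)) := by
        rw [Nat.cast_sub hrm]
        have hr0 : (0:ℝ) ≤ ((L.length-1:ℕ):ℝ) - m := by linarith
        nlinarith [hmid, mul_nonneg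
          (show (0:ℝ) ≤ 4*(g:ℝ)*Real.log g - 1 by nlinarith) hr0]
      have := Nat.le_floor h1
      omega
    · exact Nat.le_floor (le_trans hcard hmid)
  -- the injection into a finite set
  set B : Finset (ℕ × Sym (Fin (m+T₀+1+1) × Fin (m+T₀+1+1)) T₀) :=
    Finset.range (m+T₀+1) ×ˢ Finset.univ with hBdef
  have hmaps : ∀ L ∈ S, padCode g T₀ (m+T₀+1) L ∈ (B : Set (ℕ × Sym (Fin (m+T₀+1+1) × Fin (m+T₀+1+1)) T₀)) := by
    intro L hL
    rw [Finset.mem_coe, hBdef, Finset.mem_product]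
    refine ⟨?_, Finset.mem_univ _⟩
    show L.length - 1 ∈ Finset.range (m+T₀+1)
    rw [Finset.mem_range]
    have := (hkey L hL).1
    omega
  have hinj : Set.InjOn (padCode g T₀ (m+T₀+1)) S := by
    intro L₁ h₁ L₂ h₂ heq
    have hbnd : ∀ L ∈ S, ∀ p ∈ chainCode g L, p.1 < m+T₀+1 ∧ p.2 < m+T₀+1 := by
      intro L hL p hp
      obtain ⟨hp1, hp2, hp3⟩ := mem_chainCode hp
      have := (hkey L hL).1
      omega
    have hch₁ : IsGAddChainList g L₁ := h₁.1
    have hch₂ : IsGAddChainList g L₂ := h₂.1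
    exact padCode_inj hch₁ hch₂ (hkey L₁ h₁).2 (hkey L₂ h₂).2
      (hbnd L₁ h₁) (hbnd L₂ h₂) heq
  have hncard : S.ncard ≤ B.card := by
    have h := Set.ncard_le_ncard_of_injOn (padCode g T₀ (m+T₀+1)) hmaps hinj B.finite_toSet
    rwa [Set.ncard_coe_finset] at h
  have hBcard : B.card ≤ (m+T₀+1) * ((m+T₀+2)*(m+T₀+2) + T₀)^T₀ := by
    rw [hBdef, Finset.card_product, Finset.card_range, Finset.card_univ,
      Sym.card_sym_eq_choose]
    have hc : Fintype.card (Fin (m+T₀+1+1) × Fin (m+T₀+1+1)) = (m+T₀+2)*(m+T₀+2) := by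
      simp [Fintype.card_prod]
    rw [hc]
    apply Nat.mul_le_mul_left
    exact le_trans (Nat.choose_le_pow _ _) (Nat.pow_le_pow_left (by omega) _)
  -- numerical bound
  have hbase : (m+T₀+2)*(m+T₀+2) + T₀ ≤ 9*m^2 := by nlinarith [hT₀m, hmN12]
  have hcount : (S.ncard : ℝ) ≤ 3*(m:ℝ)*(9*(m:ℝ)^2)^T₀ := by
    have h1 : (S.ncard : ℝ) ≤ (((m+T₀+1) * ((m+T₀+2)*(m+T₀+2) + T₀)^T₀ : ℕ) : ℝ) := by
      exact_mod_cast le_trans hncard hBcard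
    calc (S.ncard : ℝ) ≤ (((m+T₀+1) * ((m+T₀+2)*(m+T₀+2) + T₀)^T₀ : ℕ) : ℝ) := h1
      _ = ((m:ℝ)+T₀+1) * (((m+T₀+2)*(m+T₀+2) + T₀ : ℕ):ℝ)^T₀ := by push_cast; ring
      _ ≤ 3*(m:ℝ)*(9*(m:ℝ)^2)^T₀ := by
          apply mul_le_mul
          · have : (T₀:ℝ) ≤ (m:ℝ) := by exact_mod_cast hT₀m
            linarith
          · apply pow_le_pow_left₀ (by positivity)
            have : (((m+T₀+2)*(m+T₀+2) + T₀ : ℕ):ℝ) ≤ ((9*m^2 : ℕ):ℝ) := by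
              exact_mod_cast hbase
            calc (((m+T₀+2)*(m+T₀+2) + T₀ : ℕ):ℝ) ≤ ((9*m^2 : ℕ):ℝ) := this
              _ = 9*(m:ℝ)^2 := by push_cast; ring
          · positivity
          · linarith
  -- logarithmic estimate
  have hm0R : (0:ℝ) < (m:ℝ) := by linarith
  have hpos : (0:ℝ) < 3*(m:ℝ)*(9*(m:ℝ)^2)^T₀ := by positivity
  have hlogm : Real.log m ≤ ((Lm:ℝ)+1) * Real.log g := by
    have h1 : (m:ℝ) < (g:ℝ)^(Lm+1) := by exact_mod_cast Nat.lt_pow_succ_log_self hg1 m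
    have h2 := Real.log_le_log hm0R h1.le
    rw [Real.log_pow] at h2
    push_cast at h2
    linarith
  have hlog3 : Real.log 3 ≤ Real.log g := Real.log_le_log (by norm_num) hG3
  have hlog9 : Real.log 9 ≤ 2*Real.log g := by
    have h9 : (9:ℝ) = 3*3 := by norm_num
    rw [h9, Real.log_mul (by norm_num) (by norm_num)]
    linarith
  have hT₀0R : (0:ℝ) ≤ (T₀:ℝ) := Nat.cast_nonneg _
  have hlogLHS : Real.log (3*(m:ℝ)*(9*(m:ℝ)^2)^T₀)
      ≤ ((Lm:ℝ)+2)*Real.log g + (T₀:ℝ)*(2*((Lm:ℝ)+2)*Real.log g) := by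
    rw [Real.log_mul (by positivity) (by positivity), Real.log_pow,
      Real.log_mul (by norm_num) (by positivity), Real.log_mul (by norm_num) (by positivity),
      Real.log_pow]
    have hb : Real.log 9 + (2:ℕ)*Real.log m ≤ 2*((Lm:ℝ)+2)*Real.log g := by
      push_cast
      nlinarith [hlog9, hlogm]
    have ha : Real.log 3 + Real.log m ≤ ((Lm:ℝ)+2)*Real.log g := by nlinarith [hlog3, hlogm, hlg]
    have hmul := mul_le_mul_of_nonneg_left hb hT₀0R
    linarith
  have hT2L : 2*(Lm:ℝ)*T₀ ≤ (1-ε')*m := by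
    rw [le_div_iff₀ (by linarith : (0:ℝ) < 2*(Lm:ℝ))] at hT₀le
    linarith
  have h4T : 4*(T₀:ℝ) ≤ (ε'/4)*m := by
    have e1 : 8*(T₀:ℝ) ≤ ε'*(Lm:ℝ)*(T₀:ℝ) := by
      calc 8*(T₀:ℝ) ≤ (ε'*(Lm:ℝ))*(T₀:ℝ) := mul_le_mul_of_nonneg_right h8 hT₀0R
        _ = ε'*(Lm:ℝ)*(T₀:ℝ) := by ring
    have e2 : ε'*(2*(Lm:ℝ)*T₀) ≤ ε'*((1-ε')*m) := mul_le_mul_of_nonneg_left hT2L hε'0.le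
    nlinarith [e1, e2, hε'0, hε'2, hm0R]
  have hcore : ((Lm:ℝ)+2) + (T₀:ℝ)*(2*((Lm:ℝ)+2)) ≤ ((1:ℝ)-ε'/4)*m := by
    nlinarith [hT2L, h4T, hL2]
  have hexp_le : ((Lm:ℝ)+2)*Real.log g + (T₀:ℝ)*(2*((Lm:ℝ)+2)*Real.log g)
      ≤ ((1:ℝ) - ε'/4)*(m:ℝ)*Real.log g := by
    have := mul_le_mul_of_nonneg_right hcore hlg.le
    nlinarith [this]
  have hfinal : 3*(m:ℝ)*(9*(m:ℝ)^2)^T₀ ≤ (g:ℝ)^(((1:ℝ)-ε'/4)*(m:ℝ)) := by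
    have hrpow : (g:ℝ)^(((1:ℝ)-ε'/4)*(m:ℝ)) = Real.exp (((1:ℝ)-ε'/4)*(m:ℝ)*Real.log g) := by
      rw [Real.rpow_def_of_pos hG0]
      ring_nf
    rw [hrpow]
    calc 3*(m:ℝ)*(9*(m:ℝ)^2)^T₀ = Real.exp (Real.log (3*(m:ℝ)*(9*(m:ℝ)^2)^T₀)) :=
          (Real.exp_log hpos).symm
      _ ≤ Real.exp (((1:ℝ)-ε'/4)*(m:ℝ)*Real.log g) :=
          Real.exp_le_exp.mpr (le_trans hlogLHS hexp_le)
  exact le_trans hcount hfinal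

end GChainAux

/-- for an integer `g ≥ 3` and `ε > 0`, there are `α < g` and `M` such that
for all `m ≥ M`, the number of strictly increasing `g`-addition chains
`1 = a 0 < a 1 < ⋯ < a r = n` with `λ_g(n) = m` and
`r ≤ m + (1 - ε) m / (8 g ln g · λ_g(m))` is at most `α ^ m`
(substantially less than `(g - 1) g ^ m`, the number of `n` with `λ_g(n) = m`). -/
theorem count_short_gAddChains (g : ℕ) (hg : 3 ≤ g) (ε : ℝ) (hε : 0 < ε) :
    ∃ α : ℝ, 0 < α ∧ α < g ∧ ∃ M : ℕ, ∀ m : ℕ, M ≤ m →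
      (Set.ncard {L : List ℕ |
          IsGAddChainList g L ∧ L.Pairwise (· < ·) ∧
          Nat.log g (L.getLastD 0) = m ∧
          ((L.length - 1 : ℕ) : ℝ) ≤
            (m : ℝ) + (1 - ε) * (m : ℝ) /
              (8 * (g : ℝ) * Real.log g * (Nat.log g m : ℝ))} : ℝ)
        ≤ α ^ m := by
  classical
  have hG0 : (0:ℝ) < (g:ℝ) := by
    have : (3:ℝ) ≤ (g:ℝ) := by exact_mod_cast hg
    linarith
  have hG1 : (1:ℝ) < (g:ℝ) := by
    have : (3:ℝ) ≤ (g:ℝ) := by exact_mod_cast hg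
    linarith
  set ε' : ℝ := min ε (1/2) with hε'def
  have hε'0 : 0 < ε' := lt_min hε (by norm_num)
  have hε'2 : ε' ≤ 1/2 := min_le_right _ _
  have hε'ε : ε' ≤ ε := min_le_left _ _
  refine ⟨(g:ℝ) ^ ((1:ℝ) - ε'/4), Real.rpow_pos_of_pos hG0 _, ?_, ?_⟩
  · have h := Real.rpow_lt_rpow_of_exponent_lt hG1 (show (1:ℝ) - ε'/4 < 1 by linarith)
    rwa [Real.rpow_one] at h
  · obtain ⟨M, hM⟩ := Filter.eventually_atTop.mp (GChainAux.ev_cond g hg ε' hε'0)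
    refine ⟨M, fun m hm => ?_⟩
    obtain ⟨h8, hL2, hgm⟩ := hM m hm
    have hb := GChainAux.count_bound g hg ε ε' hε'0 hε'2 hε'ε m h8 hL2 hgm
    have hpow : ((g:ℝ) ^ ((1:ℝ) - ε'/4))^m = (g:ℝ)^(((1:ℝ)-ε'/4)*(m:ℝ)) := by
      rw [← Real.rpow_natCast ((g:ℝ) ^ ((1:ℝ) - ε'/4)) m, ← Real.rpow_mul hG0.le]
    rw [hpow]
    exact hb
end
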